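/- arXiv:1501.03489 — 7 statements merged into one kernel-verified Lean document; each statement's English description precedes it below -/
import Mathlib

section
/- For polytopes P, Q, R in a real vector space V, if P + Q = P + R (Minkowski sums), then Q = R. -/
open Pointwise

/-- Rådström cancellation: if `A + B ⊆ C + B` with `B` nonempty bounded and `C`
closed convex, then `A ⊆ C`. -/
lemma radstrom {E : Type*} [NormedAddCommGroup E] [NormedSpace ℝ E]
    {A B C : Set E} (hB : B.Nonempty) (hBb : Bornology.IsBounded B)
    (hC : Convex ℝ C) (hCc : IsClosed C) (h : A + B ⊆ C + B) : A ⊆ C := by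
  intro a ha
  obtain ⟨b₀, hb₀⟩ := hB
  -- C is nonempty
  obtain ⟨c₀, hc₀, b₁, hb₁, -⟩ := Set.mem_add.1 (h (Set.add_mem_add ha hb₀))
  -- key induction
  have key : ∀ n : ℕ, ∃ c ∈ C, ∃ b ∈ B, (n : ℝ) • a + b₀ = (n : ℝ) • c + b := by
    intro n
    induction n with
    | zero => exact ⟨c₀, hc₀, b₀, hb₀, by simp⟩
    | succ n ih =>
      obtain ⟨c, hc, b, hb, hab⟩ := ih
      obtain ⟨c', hc', b', hb', hab'⟩ := Set.mem_add.1 (h (Set.add_mem_add ha hb))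
      have hn : (0:ℝ) < (n : ℝ) + 1 := by positivity
      refine ⟨((n : ℝ) / ((n : ℝ) + 1)) • c + ((1:ℝ) / ((n : ℝ) + 1)) • c', ?_, b', hb', ?_⟩
      · exact hC hc hc' (by positivity) (by positivity) (by field_simp)
      · push_cast
        rw [smul_add, smul_smul, smul_smul, mul_div_cancel₀ _ hn.ne',
          mul_one_div, div_self hn.ne', one_smul]
        have h2 : ((n : ℝ) + 1) • a + b₀ = ((n : ℝ) • a + b₀) + a := by
          rw [add_smul, one_smul]; abel
        rw [h2, hab]
        rw [show (n:ℝ) • c + b + a = (n:ℝ) • c + (a + b) by abel, ← hab']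
        abel
  -- conclude a ∈ closure C = C
  rw [← hCc.closure_eq]
  rw [Metric.mem_closure_iff]
  intro ε hε
  obtain ⟨M, hM⟩ := Metric.isBounded_iff.1 hBb
  have hM0 : 0 ≤ M := le_trans dist_nonneg (hM hb₀ hb₀)
  obtain ⟨n, hn⟩ := exists_nat_gt (M / ε)
  have hn0 : 0 < (n : ℝ) := lt_of_le_of_lt (div_nonneg hM0 hε.le) hn
  obtain ⟨c, hc, b, hb, hab⟩ := key n
  refine ⟨c, hc, ?_⟩
  have : a - c = (n : ℝ)⁻¹ • (b - b₀) := by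
    have h1 : (n : ℝ) • (a - c) = b - b₀ := by
      rw [smul_sub, ← sub_eq_zero]
      rw [← sub_eq_zero] at hab
      rw [← hab]; abel
    rw [← h1, inv_smul_smul₀ hn0.ne']
  have hdist : dist a c = (n : ℝ)⁻¹ * ‖b - b₀‖ := by
    rw [dist_eq_norm, this, norm_smul, Real.norm_eq_abs, abs_inv, abs_of_pos hn0]
  rw [hdist]
  calc (n : ℝ)⁻¹ * ‖b - b₀‖ ≤ (n : ℝ)⁻¹ * M := by
        apply mul_le_mul_of_nonneg_left _ (inv_nonneg.2 hn0.le)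
        rw [← dist_eq_norm]; exact hM hb hb₀
    _ < ε := by rwa [inv_mul_lt_iff₀ hn0, ← div_lt_iff₀ hε]

/-- Cancellation of Minkowski sums of polytopes: if `P + Q = P + R` then `Q = R`. -/
theorem minkowski_cancel {V : Type*} [AddCommGroup V] [Module ℝ V] (P Q R : Set V)
    (hP : ∃ S : Finset V, S.Nonempty ∧ P = convexHull ℝ (S : Set V))
    (hQ : ∃ S : Finset V, S.Nonempty ∧ Q = convexHull ℝ (S : Set V))
    (hR : ∃ S : Finset V, S.Nonempty ∧ R = convexHull ℝ (S : Set V))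
    (h : P + Q = P + R) : Q = R := by
  classical
  obtain ⟨S, hSne, hPS⟩ := hP
  obtain ⟨T, hTne, hQT⟩ := hQ
  obtain ⟨U, hUne, hRU⟩ := hR
  set F : Finset V := S ∪ T ∪ U with hF
  set W : Submodule ℝ V := Submodule.span ℝ (F : Set V) with hWdef
  haveI : FiniteDimensional ℝ W := FiniteDimensional.span_of_finite ℝ F.finite_toSet
  obtain ⟨W', hW'⟩ := Submodule.exists_isCompl W
  set π : V →ₗ[ℝ] W := W.linearProjOfIsCompl W' hW' with hπ
  set e : W ≃ₗ[ℝ] (Fin (Module.finrank ℝ W) → ℝ) := (Module.finBasis ℝ W).equivFun with he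
  set f : V →ₗ[ℝ] (Fin (Module.finrank ℝ W) → ℝ) := e.toLinearMap ∘ₗ π with hf
  have hπW : ∀ x (hx : x ∈ W), π x = ⟨x, hx⟩ := fun x hx =>
    Submodule.linearProjOfIsCompl_apply_left hW' ⟨x, hx⟩
  have hinj : Set.InjOn f (W : Set V) := by
    intro x hx y hy hxy
    have h1 : π x = π y := e.injective hxy
    rw [hπW x hx, hπW y hy] at h1
    exact congrArg Subtype.val h1
  -- subsets of W
  have hSW : (S : Set V) ⊆ (W : Set V) :=
    (Finset.coe_subset.2 (by simp [hF, Finset.subset_union_left])).trans Submodule.subset_span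
  have hTW : (T : Set V) ⊆ (W : Set V) := by
    refine Set.Subset.trans ?_ Submodule.subset_span
    intro x hx; simp only [hF, Finset.coe_union, Set.mem_union]; tauto
  have hUW : (U : Set V) ⊆ (W : Set V) := by
    refine Set.Subset.trans ?_ Submodule.subset_span
    intro x hx; simp only [hF, Finset.coe_union, Set.mem_union]; tauto
  have hQW : Q ⊆ (W : Set V) := hQT ▸ convexHull_min hTW W.convex
  have hRW : R ⊆ (W : Set V) := hRU ▸ convexHull_min hUW W.convex
  -- images
  have himP : f '' P = convexHull ℝ (f '' (S : Set V)) := by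
    rw [hPS, f.image_convexHull]
  have himQ : f '' Q = convexHull ℝ (f '' (T : Set V)) := by
    rw [hQT, f.image_convexHull]
  have himR : f '' R = convexHull ℝ (f '' (U : Set V)) := by
    rw [hRU, f.image_convexHull]
  have hPne : (f '' (S : Set V)).Nonempty := ((Finset.coe_nonempty.2 hSne).image f)
  have hPcomp : IsCompact (f '' P) := by
    rw [himP]; exact (S.finite_toSet.image f).isCompact_convexHull (𝕜 := ℝ)
  have hQconv : Convex ℝ (f '' Q) := by rw [himQ]; exact convex_convexHull ℝ _
  have hRconv : Convex ℝ (f '' R) := by rw [himR]; exact convex_convexHull ℝ _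
  have hQcl : IsClosed (f '' Q) := by
    rw [himQ]; exact (T.finite_toSet.image f).isCompact_convexHull (𝕜 := ℝ).isClosed
  have hRcl : IsClosed (f '' R) := by
    rw [himR]; exact (U.finite_toSet.image f).isCompact_convexHull (𝕜 := ℝ).isClosed
  have hPne' : (f '' P).Nonempty := by
    rw [himP]; exact hPne.mono (subset_convexHull ℝ _)
  have h' : f '' Q + f '' P = f '' R + f '' P := by
    rw [add_comm (f '' Q), add_comm (f '' R), ← Set.image_add, ← Set.image_add, h]
  have hsub1 : f '' Q ⊆ f '' R :=
    radstrom hPne' hPcomp.isBounded hRconv hRcl h'.le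
  have hsub2 : f '' R ⊆ f '' Q :=
    radstrom hPne' hPcomp.isBounded hQconv hQcl h'.ge
  exact (hinj.image_eq_image_iff hQW hRW).1 (hsub1.antisymm hsub2)
end

section
/- If u is a vertex (extreme point) of the Minkowski sum P + Q of two polytopes P and Q in a real vector space, then there exist a unique vertex v of P and a unique vertex w of Q with u = v + w. -/
open Pointwise

/-- Every vertex (extreme point) of the Minkowski sum `P + Q` of two polytopes decomposes
uniquely as the sum of a vertex of `P` and a vertex of `Q`. -/
theorem vertex_of_minkowski_sum_unique {V : Type*} [AddCommGroup V] [Module ℝ V]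
    (P Q : Set V)
    (hP : ∃ S : Finset V, S.Nonempty ∧ P = convexHull ℝ (S : Set V))
    (hQ : ∃ S : Finset V, S.Nonempty ∧ Q = convexHull ℝ (S : Set V))
    (u : V) (hu : u ∈ Set.extremePoints ℝ (P + Q)) :
    ∃! vw : V × V, vw.1 ∈ Set.extremePoints ℝ P ∧ vw.2 ∈ Set.extremePoints ℝ Q ∧
      u = vw.1 + vw.2 := by
  obtain ⟨hu_mem, hu_ext⟩ := hu
  obtain ⟨p, hp, q, hq, rfl⟩ := hu_mem
  beta_reduce at hu_ext
  have hpext : p ∈ Set.extremePoints ℝ P := by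
    refine ⟨hp, fun x₁ hx₁ x₂ hx₂ hseg => ?_⟩
    obtain ⟨a, b, ha, hb, hab, hsum⟩ := hseg
    have hmem : p + q ∈ openSegment ℝ (x₁ + q) (x₂ + q) :=
      ⟨a, b, ha, hb, hab, by
        rw [smul_add, smul_add, add_add_add_comm, hsum, ← add_smul, hab, one_smul]⟩
    have e1 := hu_ext (Set.add_mem_add hx₁ hq) (Set.add_mem_add hx₂ hq) hmem
    exact add_right_cancel e1
  have hqext : q ∈ Set.extremePoints ℝ Q := by
    refine ⟨hq, fun y₁ hy₁ y₂ hy₂ hseg => ?_⟩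
    obtain ⟨a, b, ha, hb, hab, hsum⟩ := hseg
    have hmem : p + q ∈ openSegment ℝ (p + y₁) (p + y₂) :=
      ⟨a, b, ha, hb, hab, by
        rw [smul_add, smul_add, add_add_add_comm, hsum, ← add_smul, hab, one_smul]⟩
    have e1 := hu_ext (Set.add_mem_add hp hy₁) (Set.add_mem_add hp hy₂) hmem
    exact add_left_cancel e1
  refine ⟨(p, q), ⟨hpext, hqext, rfl⟩, ?_⟩
  rintro ⟨v, w⟩ ⟨hv, hw, heq⟩
  beta_reduce at heq
  change p + q = v + w at heq
  change v ∈ _ at hv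
  change w ∈ _ at hw
  have hvP : v ∈ P := hv.1
  have hwQ : w ∈ Q := hw.1
  have hmem : p + q ∈ openSegment ℝ (v + q) (p + w) := by
    refine ⟨1/2, 1/2, by norm_num, by norm_num, by norm_num, ?_⟩
    have hsum : (v + q) + (p + w) = (p + q) + (p + q) := by
      calc (v + q) + (p + w) = (v + w) + (p + q) := by abel
        _ = (p + q) + (p + q) := by rw [← heq]
    rw [← smul_add, hsum, ← two_smul ℝ, smul_smul]
    norm_num
  have e1 := hu_ext (Set.add_mem_add hvP hq) (Set.add_mem_add hp hwQ) hmem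
  have e2 := hu_ext (Set.add_mem_add hp hwQ) (Set.add_mem_add hvP hq)
    (by rw [openSegment_symm]; exact hmem)
  have : v = p := add_right_cancel e1
  have : w = q := add_left_cancel e2
  simp_all
end

section
/- For every vertex v of a polytope P in a real vector space, there exists a vertex w of a polytope Q such that v + w is a vertex of the Minkowski sum P + Q. -/
open Pointwise

/-- Strict separation of a point from the convex hull of a finite set, in an arbitrary
real vector space (no topology on `V` needed). -/
private lemma sep_lemma {V : Type*} [AddCommGroup V] [Module ℝ V]
    (S : Finset V) (v : V) (hv : v ∉ convexHull ℝ (S : Set V)) :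
    ∃ f : V →ₗ[ℝ] ℝ, ∀ s ∈ S, f s < f v := by
  classical
  set W : Submodule ℝ V := Submodule.span ℝ (insert v (S : Set V)) with hWdef
  haveI : FiniteDimensional ℝ W :=
    FiniteDimensional.span_of_finite ℝ (S.finite_toSet.insert v)
  have hvW : v ∈ W := Submodule.subset_span (Set.mem_insert _ _)
  have hSW : ∀ s ∈ S, s ∈ W := fun s hs =>
    Submodule.subset_span (Set.mem_insert_of_mem _ hs)
  set n := Module.finrank ℝ W with hn
  let b := Module.finBasis ℝ W
  let e : W ≃ₗ[ℝ] (Fin n → ℝ) := b.equivFun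
  let SW : Set W := (W.subtype) ⁻¹' (S : Set V)
  have hSWfin : SW.Finite := S.finite_toSet.preimage Subtype.coe_injective.injOn
  set A : Set (Fin n → ℝ) := convexHull ℝ (⇑e '' SW) with hA
  have hAclosed : IsClosed A := ((hSWfin.image ⇑e).isCompact_convexHull (𝕜 := ℝ)).isClosed
  have hvA : e ⟨v, hvW⟩ ∉ A := by
    intro h
    have h' : e ⟨v, hvW⟩ ∈ ⇑e.toLinearMap '' (convexHull ℝ SW) := by
      rw [e.toLinearMap.image_convexHull]
      exact h
    obtain ⟨y, hy, hye⟩ := h'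
    have hyv : y = ⟨v, hvW⟩ := e.injective hye
    subst hyv
    have h2 : ((⟨v, hvW⟩ : W) : V) ∈ ⇑W.subtype '' (convexHull ℝ SW) :=
      ⟨_, hy, rfl⟩
    rw [W.subtype.image_convexHull] at h2
    have him : ⇑W.subtype '' SW = (S : Set V) := by
      apply Set.image_preimage_eq_of_subset
      intro s hs
      exact ⟨⟨s, hSW s hs⟩, rfl⟩
    rw [him] at h2
    exact hv h2
  obtain ⟨g, u, hgu, hugv⟩ :=
    geometric_hahn_banach_closed_point (convex_convexHull ℝ _) hAclosed hvA
  obtain ⟨W', hcompl⟩ := W.exists_isCompl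
  let π : V →ₗ[ℝ] W := W.linearProjOfIsCompl W' hcompl
  have hπ : ∀ (x : V) (hx : x ∈ W), π x = ⟨x, hx⟩ := fun x hx =>
    Submodule.linearProjOfIsCompl_apply_left hcompl ⟨x, hx⟩
  refine ⟨g.toLinearMap ∘ₗ (e : W →ₗ[ℝ] (Fin n → ℝ)) ∘ₗ π, fun s hs => ?_⟩
  have h1 : (g.toLinearMap ∘ₗ (e : W →ₗ[ℝ] (Fin n → ℝ)) ∘ₗ π) s = g (e ⟨s, hSW s hs⟩) := by
    simp [LinearMap.comp_apply, hπ s (hSW s hs)]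
  have h2 : (g.toLinearMap ∘ₗ (e : W →ₗ[ℝ] (Fin n → ℝ)) ∘ₗ π) v = g (e ⟨v, hvW⟩) := by
    simp [LinearMap.comp_apply, hπ v hvW]
  rw [h1, h2]
  have hsA : e ⟨s, hSW s hs⟩ ∈ A :=
    subset_convexHull ℝ _ ⟨⟨s, hSW s hs⟩, hs, rfl⟩
  exact lt_trans (hgu _ hsA) hugv

/-- If a convex combination attains the maximum value of a linear functional over a finite
set, then it lies in the convex hull of the maximizing subset. -/
private lemma face_subset {V : Type*} [AddCommGroup V] [Module ℝ V]
    (f : V →ₗ[ℝ] ℝ) (T : Finset V) (c : ℝ) (hT : ∀ t ∈ T, f t ≤ c)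
    {q : V} (hq : q ∈ convexHull ℝ (T : Set V)) (hcq : c ≤ f q) :
    q ∈ convexHull ℝ ((T.filter fun t => c ≤ f t : Finset V) : Set V) := by
  classical
  rw [Finset.convexHull_eq] at hq
  obtain ⟨w, hw0, hw1, hwq⟩ := hq
  rw [Finset.centerMass_eq_of_sum_1 _ _ hw1] at hwq
  have hfq : ∑ y ∈ T, w y * f y = f q := by
    rw [← hwq]
    simp [map_sum, map_smul, smul_eq_mul]
  -- weights vanish off the maximizing set
  have hzero : ∀ y ∈ T, ¬ (c ≤ f y) → w y = 0 := by
    intro y₀ hy₀ hfy₀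
    by_contra hwne
    have hwpos : 0 < w y₀ := lt_of_le_of_ne (hw0 y₀ hy₀) (Ne.symm hwne)
    have hlt : ∑ y ∈ T, w y * f y < ∑ y ∈ T, w y * c := by
      apply Finset.sum_lt_sum
      · intro i hi
        exact mul_le_mul_of_nonneg_left (hT i hi) (hw0 i hi)
      · exact ⟨y₀, hy₀, by
          have : f y₀ < c := not_le.1 hfy₀
          exact mul_lt_mul_of_pos_left this hwpos⟩
    rw [← Finset.sum_mul, hw1, one_mul, hfq] at hlt
    exact absurd hcq (not_le.2 hlt)
  set T' := T.filter fun t => c ≤ f t with hT'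
  have hsum' : ∑ y ∈ T', w y = 1 := by
    rw [← hw1]
    apply Finset.sum_subset (Finset.filter_subset _ _)
    intro y hy hyn
    have : ¬ (c ≤ f y) := by
      intro hcy
      exact hyn (Finset.mem_filter.2 ⟨hy, hcy⟩)
    exact hzero y hy this
  have hq' : q = ∑ y ∈ T', w y • y := by
    rw [← hwq]
    symm
    apply Finset.sum_subset (Finset.filter_subset _ _)
    intro y hy hyn
    have : ¬ (c ≤ f y) := by
      intro hcy
      exact hyn (Finset.mem_filter.2 ⟨hy, hcy⟩)
    simp [hzero y hy this]
  have hmem : T'.centerMass w id ∈ convexHull ℝ ((T' : Finset V) : Set V) :=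
    T'.centerMass_mem_convexHull (fun i hi => hw0 i (Finset.filter_subset _ _ hi))
      (by rw [hsum']; norm_num) (fun i hi => Finset.mem_coe.2 hi)
  rw [Finset.centerMass_eq_of_sum_1 _ _ hsum'] at hmem
  simpa [← hq'] using hmem

/-- If the functional attains its strict maximum over `S` only at `v`, then any point of the
convex hull where `f` is at least `f v` equals `v`. -/
private lemma face_eq {V : Type*} [AddCommGroup V] [Module ℝ V]
    (f : V →ₗ[ℝ] ℝ) (S : Finset V) (v : V) (h : ∀ s ∈ S, s ≠ v → f s < f v)
    {p : V} (hp : p ∈ convexHull ℝ (S : Set V)) (hvp : f v ≤ f p) : p = v := by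
  classical
  have hT : ∀ s ∈ S, f s ≤ f v := by
    intro s hs
    by_cases hsv : s = v
    · simp [hsv]
    · exact (h s hs hsv).le
  have hmem := face_subset f S (f v) hT hp hvp
  have hsub : ((S.filter fun t => f v ≤ f t : Finset V) : Set V) ⊆ ({v} : Set V) := by
    intro t ht
    rw [Finset.mem_coe, Finset.mem_filter] at ht
    by_contra hne
    exact absurd ht.2 (not_le.2 (h t ht.1 hne))
  have := convexHull_min hsub (convex_singleton v) hmem
  exact this

private lemma le_on_hull {V : Type*} [AddCommGroup V] [Module ℝ V]
    (f : V →ₗ[ℝ] ℝ) (T : Finset V) (c : ℝ) (hT : ∀ t ∈ T, f t ≤ c)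
    {q : V} (hq : q ∈ convexHull ℝ (T : Set V)) : f q ≤ c := by
  have hsub : convexHull ℝ (T : Set V) ⊆ {x | f x ≤ c} :=
    convexHull_min (fun s hs => hT s (Finset.mem_coe.1 hs)) (convex_halfSpace_le f.isLinear c)
  exact hsub hq

private lemma combo2 {a b X x1 x2 : ℝ} (ha : 0 < a) (hb : 0 < b) (hab : a + b = 1)
    (h1 : x1 ≤ X) (h2 : x2 ≤ X) (he : a * x1 + b * x2 = X) : x1 = X ∧ x2 = X := by
  have hb' : b = 1 - a := by linarith
  subst hb'
  refine ⟨le_antisymm h1 ?_, le_antisymm h2 ?_⟩ <;>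
    nlinarith [mul_nonneg ha.le (sub_nonneg.2 h1), mul_nonneg hb.le (sub_nonneg.2 h2)]

private lemma combo4 {a b X Y x1 y1 x2 y2 : ℝ} (ha : 0 < a) (hb : 0 < b) (hab : a + b = 1)
    (h1 : x1 ≤ X) (h2 : y1 ≤ Y) (h3 : x2 ≤ X) (h4 : y2 ≤ Y)
    (he : a * (x1 + y1) + b * (x2 + y2) = X + Y) :
    x1 = X ∧ y1 = Y ∧ x2 = X ∧ y2 = Y := by
  have hb' : b = 1 - a := by linarith
  subst hb'
  have k1 := mul_nonneg ha.le (sub_nonneg.2 h1)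
  have k2 := mul_nonneg ha.le (sub_nonneg.2 h2)
  have k3 := mul_nonneg hb.le (sub_nonneg.2 h3)
  have k4 := mul_nonneg hb.le (sub_nonneg.2 h4)
  refine ⟨le_antisymm h1 ?_, le_antisymm h2 ?_, le_antisymm h3 ?_, le_antisymm h4 ?_⟩ <;>
    nlinarith [k1, k2, k3, k4]

/-- The convex hull of a nonempty finite set has an extreme point. -/
private lemma exists_extreme {V : Type*} [AddCommGroup V] [Module ℝ V] :
    ∀ U : Finset V, U.Nonempty →
      ∃ w, w ∈ Set.extremePoints ℝ (convexHull ℝ (U : Set V)) := by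
  classical
  intro U
  induction U using Finset.strongInduction with
  | _ U ih =>
    intro hU
    by_cases hcase : ∃ u ∈ U, u ∈ convexHull ℝ ((U.erase u : Finset V) : Set V)
    · obtain ⟨u, huU, hu⟩ := hcase
      have hsub : convexHull ℝ (U : Set V) = convexHull ℝ ((U.erase u : Finset V) : Set V) := by
        apply le_antisymm
        · apply convexHull_min _ (convex_convexHull ℝ _)
          intro t ht
          rw [Finset.mem_coe] at ht
          by_cases htu : t = u
          · subst htu; exact hu
          · exact subset_convexHull ℝ _ (Finset.mem_coe.2 (Finset.mem_erase.2 ⟨htu, ht⟩))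
        · exact convexHull_mono (Finset.coe_subset.2 (Finset.erase_subset _ _))
      have hne : (U.erase u).Nonempty := by
        rcases Finset.eq_empty_or_nonempty (U.erase u) with h | h
        · rw [h] at hu; simp at hu
        · exact h
      obtain ⟨w, hw⟩ := ih (U.erase u) (Finset.erase_ssubset huU) hne
      exact ⟨w, by rw [hsub]; exact hw⟩
    · push_neg at hcase
      obtain ⟨u, huU⟩ := hU
      obtain ⟨f, hf⟩ := sep_lemma (U.erase u) u (hcase u huU)
      have hf' : ∀ s ∈ U, s ≠ u → f s < f u := fun s hs hne =>
        hf s (Finset.mem_erase.2 ⟨hne, hs⟩)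
      have hT : ∀ s ∈ U, f s ≤ f u := by
        intro s hs
        by_cases hsu : s = u
        · simp [hsu]
        · exact (hf' s hs hsu).le
      refine ⟨u, subset_convexHull ℝ _ (Finset.mem_coe.2 huU), ?_⟩
      rintro x₁ hx₁ x₂ hx₂ ⟨a, b, ha, hb, hab, habeq⟩
      have l1 := le_on_hull f U (f u) hT hx₁
      have l2 := le_on_hull f U (f u) hT hx₂
      have e1 : a * f x₁ + b * f x₂ = f u := by
        rw [← habeq]; simp [smul_eq_mul]
      obtain ⟨m1, m2⟩ := combo2 ha hb hab l1 l2 e1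
      exact face_eq f U u hf' hx₁ m1.ge

/-- For every vertex `v` of a polytope `P` there is a vertex `w` of a polytope `Q`
such that `v + w` is a vertex of the Minkowski sum `P + Q`. -/
theorem exists_vertex_add_vertex {V : Type*} [AddCommGroup V] [Module ℝ V]
    (P Q : Set V)
    (hP : ∃ S : Finset V, S.Nonempty ∧ P = convexHull ℝ (S : Set V))
    (hQ : ∃ S : Finset V, S.Nonempty ∧ Q = convexHull ℝ (S : Set V))
    (v : V) (hv : v ∈ Set.extremePoints ℝ P) :
    ∃ w ∈ Set.extremePoints ℝ Q, v + w ∈ Set.extremePoints ℝ (P + Q) := by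
  classical
  obtain ⟨S, hSne, rfl⟩ := hP
  obtain ⟨T, hTne, rfl⟩ := hQ
  have hvP : v ∈ convexHull ℝ (S : Set V) := hv.1
  -- v is not in the hull of the other points of S
  have hconv : Convex ℝ (convexHull ℝ (S : Set V) \ {v}) :=
    (((convex_convexHull ℝ (S : Set V)).mem_extremePoints_iff_convex_diff).1 hv).2
  have hvnot : v ∉ convexHull ℝ ((S.erase v : Finset V) : Set V) := by
    intro h
    have hsub : ((S.erase v : Finset V) : Set V) ⊆ convexHull ℝ (S : Set V) \ {v} := by
      intro t ht
      rw [Finset.mem_coe, Finset.mem_erase] at ht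
      exact ⟨subset_convexHull ℝ _ (Finset.mem_coe.2 ht.2), ht.1⟩
    exact (convexHull_min hsub hconv h).2 rfl
  obtain ⟨f, hf⟩ := sep_lemma (S.erase v) v hvnot
  have hf' : ∀ s ∈ S, s ≠ v → f s < f v := fun s hs hne =>
    hf s (Finset.mem_erase.2 ⟨hne, hs⟩)
  have hSle : ∀ s ∈ S, f s ≤ f v := by
    intro s hs
    by_cases hsv : s = v
    · simp [hsv]
    · exact (hf' s hs hsv).le
  -- the maximum of f over T
  set c : ℝ := (T.image f).max' (hTne.image f) with hc
  have hTc : ∀ t ∈ T, f t ≤ c := fun t ht =>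
    Finset.le_max' _ _ (Finset.mem_image_of_mem f ht)
  set T' : Finset V := T.filter fun t => c ≤ f t with hT'def
  have hT'ne : T'.Nonempty := by
    have hmem := (T.image f).max'_mem (hTne.image f)
    rw [Finset.mem_image] at hmem
    obtain ⟨t₀, ht₀, hft₀⟩ := hmem
    exact ⟨t₀, Finset.mem_filter.2 ⟨ht₀, hft₀.ge⟩⟩
  obtain ⟨w, hwext⟩ := exists_extreme T' hT'ne
  have hwT' : w ∈ convexHull ℝ ((T' : Finset V) : Set V) := hwext.1
  have hT'T : convexHull ℝ ((T' : Finset V) : Set V) ⊆ convexHull ℝ (T : Set V) :=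
    convexHull_mono (Finset.coe_subset.2 (Finset.filter_subset _ _))
  have hwQ : w ∈ convexHull ℝ (T : Set V) := hT'T hwT'
  have hwc : f w = c := by
    apply le_antisymm (le_on_hull f T c hTc hwQ)
    have hsub : convexHull ℝ ((T' : Finset V) : Set V) ⊆ {x | c ≤ f x} := by
      apply convexHull_min _ (convex_halfSpace_ge f.isLinear c)
      intro t ht
      rw [Finset.mem_coe, Finset.mem_filter] at ht
      exact ht.2
    exact hsub hwT'
  have hwQext : w ∈ Set.extremePoints ℝ (convexHull ℝ (T : Set V)) := by
    refine ⟨hwQ, ?_⟩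
    rintro y₁ hy₁ y₂ hy₂ ⟨a, b, ha, hb, hab, habeq⟩
    have l1 := le_on_hull f T c hTc hy₁
    have l2 := le_on_hull f T c hTc hy₂
    have e1 : a * f y₁ + b * f y₂ = c := by
      rw [← hwc, ← habeq]; simp [smul_eq_mul]
    obtain ⟨m1, m2⟩ := combo2 ha hb hab l1 l2 e1
    have n1 : y₁ ∈ convexHull ℝ ((T' : Finset V) : Set V) := face_subset f T c hTc hy₁ m1.ge
    have n2 : y₂ ∈ convexHull ℝ ((T' : Finset V) : Set V) := face_subset f T c hTc hy₂ m2.ge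
    exact hwext.2 n1 n2 ⟨a, b, ha, hb, hab, habeq⟩
  refine ⟨w, hwQext, ?_⟩
  refine ⟨Set.add_mem_add hvP hwQ, ?_⟩
  rintro z₁ hz₁ z₂ hz₂ ⟨a, b, ha, hb, hab, habeq⟩
  obtain ⟨p₁, hp₁, q₁, hq₁, rfl⟩ := hz₁
  obtain ⟨p₂, hp₂, q₂, hq₂, rfl⟩ := hz₂
  have lp1 := le_on_hull f S (f v) hSle hp₁
  have lp2 := le_on_hull f S (f v) hSle hp₂
  have lq1 := le_on_hull f T c hTc hq₁
  have lq2 := le_on_hull f T c hTc hq₂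
  have e1 : a * (f p₁ + f q₁) + b * (f p₂ + f q₂) = f v + c := by
    have := congrArg f habeq
    simp only [map_add, map_smul, smul_eq_mul] at this
    rw [← hwc]
    exact this
  obtain ⟨mp1, mq1, mp2, mq2⟩ := combo4 ha hb hab lp1 lq1 lp2 lq2 e1
  have hp1v : p₁ = v := face_eq f S v hf' hp₁ mp1.ge
  have hp2v : p₂ = v := face_eq f S v hf' hp₂ mp2.ge
  have hq1T' : q₁ ∈ convexHull ℝ ((T' : Finset V) : Set V) := face_subset f T c hTc hq₁ mq1.ge
  have hq2T' : q₂ ∈ convexHull ℝ ((T' : Finset V) : Set V) := face_subset f T c hTc hq₂ mq2.ge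
  have hwcombo : a • q₁ + b • q₂ = w := by
    beta_reduce at habeq
    have h1 : a • (p₁ + q₁) + b • (p₂ + q₂) = v + (a • q₁ + b • q₂) := by
      rw [hp1v, hp2v]
      have h2 : a • (v + q₁) + b • (v + q₂) = (a + b) • v + (a • q₁ + b • q₂) := by
        rw [smul_add, smul_add, add_smul]
        abel
      rw [h2, hab, one_smul]
    rw [h1] at habeq
    exact add_left_cancel habeq
  have hq1w := hwext.2 hq1T' hq2T' ⟨a, b, ha, hb, hab, hwcombo⟩
  rw [hp1v, hq1w]
end

section
/- In the free group F on generators x₁, …, x_k, the fundamental formula of Fox calculus holds: for every f in the group ring ℤ[F], f − α(f)·e = Σᵢ (∂f/∂xᵢ)(xᵢ − 1), where α : ℤ[F] → ℤ is the augmentation map and e is the identity element. -/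
open MonoidAlgebra

/-- The fundamental formula of Fox calculus: if `d i` is the Fox derivative `∂/∂xᵢ`
on `ℤ[F]` for the free group `F` on `x₁, …, x_k` (the ℤ-linear map determined by
`∂xⱼ/∂xᵢ = δᵢⱼ` and `∂(uv)/∂xᵢ = ∂u/∂xᵢ + u·∂v/∂xᵢ`), and `α` is the augmentation,
then `f - α(f)·1 = Σᵢ (∂f/∂xᵢ)·(xᵢ - 1)` for every `f ∈ ℤ[F]`. -/
theorem fox_fundamental_formula (k : ℕ)
    (d : Fin k →
      MonoidAlgebra ℤ (FreeGroup (Fin k)) →ₗ[ℤ] MonoidAlgebra ℤ (FreeGroup (Fin k)))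
    (hgen : ∀ i j : Fin k,
      d i (of ℤ (FreeGroup (Fin k)) (FreeGroup.of j)) = if j = i then 1 else 0)
    (hprod : ∀ (i : Fin k) (u v : FreeGroup (Fin k)),
      d i (of ℤ (FreeGroup (Fin k)) (u * v)) =
        d i (of ℤ (FreeGroup (Fin k)) u) +
          of ℤ (FreeGroup (Fin k)) u * d i (of ℤ (FreeGroup (Fin k)) v))
    (α : MonoidAlgebra ℤ (FreeGroup (Fin k)) →ₗ[ℤ] ℤ)
    (hα : ∀ g : FreeGroup (Fin k), α (of ℤ (FreeGroup (Fin k)) g) = 1)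
    (f : MonoidAlgebra ℤ (FreeGroup (Fin k))) :
    f - α f • (1 : MonoidAlgebra ℤ (FreeGroup (Fin k))) =
      ∑ i : Fin k, d i f * (of ℤ (FreeGroup (Fin k)) (FreeGroup.of i) - 1) := by
  have hx1 : of ℤ (FreeGroup (Fin k)) (1 : FreeGroup (Fin k)) = 1 := map_one _
  -- d i 1 = 0
  have hone : ∀ i, d i (1 : MonoidAlgebra ℤ (FreeGroup (Fin k))) = 0 := by
    intro i
    have h := hprod i 1 1
    rw [one_mul, hx1, one_mul] at h
    exact left_eq_add.mp h
  -- key: claim for group elements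
  have key : ∀ g : FreeGroup (Fin k),
      of ℤ (FreeGroup (Fin k)) g - 1 =
        ∑ i : Fin k, d i (of ℤ (FreeGroup (Fin k)) g)
          * (of ℤ (FreeGroup (Fin k)) (FreeGroup.of i) - 1) := by
    intro g
    induction g using FreeGroup.induction_on with
    | C1 =>
      rw [hx1]
      simp [hone]
    | of j =>
      show of ℤ (FreeGroup (Fin k)) (FreeGroup.of j) - 1 = _
      have h : ∀ i : Fin k,
          d i (of ℤ (FreeGroup (Fin k)) (FreeGroup.of j))
            * (of ℤ (FreeGroup (Fin k)) (FreeGroup.of i) - 1)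
          = if j = i then of ℤ (FreeGroup (Fin k)) (FreeGroup.of j) - 1 else 0 := by
        intro i
        rw [hgen i j]
        by_cases hji : j = i
        · subst hji; simp
        · simp [hji]
      calc of ℤ (FreeGroup (Fin k)) (FreeGroup.of j) - 1
          = ∑ i : Fin k, if j = i then of ℤ (FreeGroup (Fin k)) (FreeGroup.of j) - 1
              else 0 := by simp
        _ = _ := (Finset.sum_congr rfl fun i _ => (h i)).symm
    | inv_of j ih =>
      have ih' : of ℤ (FreeGroup (Fin k)) (FreeGroup.of j) - 1 =
          ∑ i : Fin k, d i (of ℤ (FreeGroup (Fin k)) (FreeGroup.of j))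
            * (of ℤ (FreeGroup (Fin k)) (FreeGroup.of i) - 1) := ih
      show of ℤ (FreeGroup (Fin k)) (FreeGroup.of j)⁻¹ - 1 =
        ∑ i : Fin k, d i (of ℤ (FreeGroup (Fin k)) (FreeGroup.of j)⁻¹)
          * (of ℤ (FreeGroup (Fin k)) (FreeGroup.of i) - 1)
      have hinv : ∀ i, d i (of ℤ (FreeGroup (Fin k)) (FreeGroup.of j)⁻¹)
          = -(of ℤ (FreeGroup (Fin k)) (FreeGroup.of j)⁻¹
              * d i (of ℤ (FreeGroup (Fin k)) (FreeGroup.of j))) := by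
        intro i
        have h := hprod i (FreeGroup.of j)⁻¹ (FreeGroup.of j)
        rw [inv_mul_cancel, hx1, hone i] at h
        exact eq_neg_of_add_eq_zero_left h.symm
      calc of ℤ (FreeGroup (Fin k)) (FreeGroup.of j)⁻¹ - 1
          = -(of ℤ (FreeGroup (Fin k)) (FreeGroup.of j)⁻¹
              * (of ℤ (FreeGroup (Fin k)) (FreeGroup.of j) - 1)) := by
            rw [mul_sub, mul_one, ← map_mul, inv_mul_cancel, hx1, neg_sub]
        _ = _ := by
            rw [ih', Finset.mul_sum, ← Finset.sum_neg_distrib]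
            refine Finset.sum_congr rfl fun i _ => ?_
            rw [hinv i, neg_mul, mul_assoc]
    | mul u v ihu ihv =>
      calc of ℤ (FreeGroup (Fin k)) (u * v) - 1
          = (of ℤ (FreeGroup (Fin k)) u - 1)
            + of ℤ (FreeGroup (Fin k)) u * (of ℤ (FreeGroup (Fin k)) v - 1) := by
            rw [map_mul, mul_sub, mul_one]; abel
        _ = _ := by
            rw [ihu, ihv, Finset.mul_sum, ← Finset.sum_add_distrib]
            refine Finset.sum_congr rfl fun i _ => ?_
            rw [hprod i u v, add_mul, mul_assoc]
  -- extend to all of the group ring by linearity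
  induction f using MonoidAlgebra.induction_linear with
  | zero => simp
  | add p q hp hq =>
    rw [map_add, add_smul]
    have habel : ∀ (a b : ℤ) (P Q : MonoidAlgebra ℤ (FreeGroup (Fin k))),
        P + Q - (a • 1 + b • 1) = (P - a • 1) + (Q - b • 1) := by
      intro a b P Q; abel
    rw [habel (α p) (α q) p q, hp, hq, ← Finset.sum_add_distrib]
    exact Finset.sum_congr rfl fun i _ => by rw [map_add, add_mul]
  | single g a =>
    have hs : (MonoidAlgebra.single g a : MonoidAlgebra ℤ (FreeGroup (Fin k)))
        = a • of ℤ (FreeGroup (Fin k)) g := by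
      simp [MonoidAlgebra.of_apply, MonoidAlgebra.smul_single', smul_eq_mul, mul_one]
    rw [hs, map_smul, hα g, smul_eq_mul, mul_one, ← smul_sub, key g]
    rw [Finset.smul_sum]
    exact Finset.sum_congr rfl fun i _ => by rw [map_smul, smul_mul_assoc]
end

section
/- If G is a locally indicable group, then the only elements of ℤ[G] that have a left inverse in ℤ[G] are the monomials ±g, g ∈ G. -/
open Finset

private theorem uniqueMul_of_map {G : Type*} [Group G] {A B : Finset G} {a b g k : G}
    (hu : UniqueMul (A.map ⟨(g * ·), mul_right_injective g⟩)
      (B.map ⟨(· * k), mul_left_injective k⟩) (g * a) (b * k)) :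
    UniqueMul A B a b := by
  intro x y hx hy hxy
  have hx' : g * x ∈ A.map ⟨(g * ·), mul_right_injective g⟩ :=
    Finset.mem_map_of_mem _ hx
  have hy' : y * k ∈ B.map ⟨(· * k), mul_left_injective k⟩ :=
    Finset.mem_map_of_mem _ hy
  have he : (g * x) * (y * k) = (g * a) * (b * k) := by
    have e1 : (g * x) * (y * k) = g * ((x * y) * k) := by group
    have e2 : (g * a) * (b * k) = g * ((a * b) * k) := by group
    rw [e1, e2, hxy]
  obtain ⟨h1, h2⟩ := hu hx' hy' he
  exact ⟨mul_left_cancel h1, mul_right_cancel h2⟩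

private theorem uniqueProds_of_locallyIndicable {G : Type*} [Group G]
    (hG : ∀ H : Subgroup G, H ≠ ⊥ → H.FG →
      ∃ f : H →* Multiplicative ℤ, Function.Surjective f) :
    UniqueProds G := by
  classical
  -- core statement with `1 ∈ A`, `1 ∈ B`, by strong induction on `#A + #B`
  have core : ∀ n : ℕ, ∀ A B : Finset G, (1 : G) ∈ A → (1 : G) ∈ B → #A + #B ≤ n →
      ∃ a ∈ A, ∃ b ∈ B, UniqueMul A B a b := by
    intro n
    induction n using Nat.strong_induction_on with
    | _ n ih =>
      intro A B h1A h1B hcard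
      set H : Subgroup G := Subgroup.closure (↑(A ∪ B) : Set G) with hH
      have hmem : ∀ x ∈ A ∪ B, x ∈ H := fun x hx => Subgroup.subset_closure hx
      by_cases hbot : H = ⊥
      · -- all elements are 1
        have hall : ∀ x ∈ A ∪ B, x = 1 := by
          intro x hx
          have := hmem x hx
          rwa [hbot, Subgroup.mem_bot] at this
        refine ⟨1, h1A, 1, h1B, fun x y hx hy _ => ?_⟩
        exact ⟨hall x (Finset.mem_union_left _ hx), hall y (Finset.mem_union_right _ hy)⟩
      · have hFG : H.FG := ⟨A ∪ B, rfl⟩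
        obtain ⟨φ, hφ⟩ := hG H hbot hFG
        set deg : G → ℤ := fun g =>
          if h : g ∈ H then Multiplicative.toAdd (φ ⟨g, h⟩) else 0 with hdeg
        have deg_eq : ∀ (x : G) (hx : x ∈ H), deg x = Multiplicative.toAdd (φ ⟨x, hx⟩) := by
          intro x hx; simp [hdeg, dif_pos hx]
        have deg_mul : ∀ x y, x ∈ H → y ∈ H → deg (x * y) = deg x + deg y := by
          intro x y hx hy
          rw [deg_eq x hx, deg_eq y hy, deg_eq (x * y) (mul_mem hx hy)]
          have : (⟨x * y, mul_mem hx hy⟩ : H) = ⟨x, hx⟩ * ⟨y, hy⟩ := rfl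
          rw [this, map_mul]
          rfl
        have deg_one : deg 1 = 0 := by
          rw [deg_eq 1 (one_mem H)]
          have : (⟨(1 : G), one_mem H⟩ : H) = 1 := rfl
          rw [this, map_one]
          rfl
        have hAne : A.Nonempty := ⟨1, h1A⟩
        have hBne : B.Nonempty := ⟨1, h1B⟩
        set dA : ℤ := (A.image deg).max' (hAne.image deg) with hdA
        set dB : ℤ := (B.image deg).max' (hBne.image deg) with hdB
        set A' : Finset G := A.filter (fun x => deg x = dA) with hA'
        set B' : Finset G := B.filter (fun x => deg x = dB) with hB'
        have hA'ne : A'.Nonempty := by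
          obtain ⟨a, haA, ha⟩ := Finset.mem_image.mp ((A.image deg).max'_mem (hAne.image deg))
          exact ⟨a, Finset.mem_filter.mpr ⟨haA, ha⟩⟩
        have hB'ne : B'.Nonempty := by
          obtain ⟨b, hbB, hb⟩ := Finset.mem_image.mp ((B.image deg).max'_mem (hBne.image deg))
          exact ⟨b, Finset.mem_filter.mpr ⟨hbB, hb⟩⟩
        by_cases hfull : A' = A ∧ B' = B
        · -- contradiction with surjectivity of φ
          exfalso
          have hdA0 : dA = 0 := by
            have := Finset.mem_filter.mp (hfull.1 ▸ h1A)
            rw [← this.2, deg_one]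
          have hdB0 : dB = 0 := by
            have := Finset.mem_filter.mp (hfull.2 ▸ h1B)
            rw [← this.2, deg_one]
          have hker : H ≤ (φ.ker).map H.subtype := by
            refine le_of_eq_of_le hH ((Subgroup.closure_le _).mpr ?_)
            intro x hx
            have hxH : x ∈ H := hmem x hx
            have hx0 : deg x = 0 := by
              rcases Finset.mem_union.mp hx with hxa | hxb
              · exact (Finset.mem_filter.mp (hfull.1 ▸ hxa)).2.trans hdA0
              · exact (Finset.mem_filter.mp (hfull.2 ▸ hxb)).2.trans hdB0
            refine ⟨⟨x, hxH⟩, ?_, rfl⟩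
            show φ ⟨x, hxH⟩ = 1
            have : Multiplicative.toAdd (φ ⟨x, hxH⟩) = 0 := by
              rw [← deg_eq x hxH]; exact hx0
            exact Multiplicative.toAdd.injective this
          obtain ⟨y, hy⟩ := hφ (Multiplicative.ofAdd 1)
          obtain ⟨z, hz, hzy⟩ := hker y.2
          have hzy' : z = y := Subtype.ext hzy
          have hz1 : φ z = 1 := hz
          rw [hzy', hy] at hz1
          have := congrArg Multiplicative.toAdd hz1
          simp at this
        · -- recurse on smaller sets
          have hA'sub : A' ⊆ A := Finset.filter_subset _ _
          have hB'sub : B' ⊆ B := Finset.filter_subset _ _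
          have hlt : #A' + #B' < #A + #B := by
            rcases not_and_or.mp hfull with hne | hne
            · have h1 : #A' < #A := Finset.card_lt_card (hA'sub.ssubset_of_ne hne)
              have h2 : #B' ≤ #B := Finset.card_le_card hB'sub
              omega
            · have h1 : #A' ≤ #A := Finset.card_le_card hA'sub
              have h2 : #B' < #B := Finset.card_lt_card (hB'sub.ssubset_of_ne hne)
              omega
          -- translated recursion (need 1 ∈ sets for ih, so translate A', B')
          obtain ⟨a₁, ha₁⟩ := hA'ne
          obtain ⟨b₁, hb₁⟩ := hB'ne
          set eA : G ↪ G := ⟨(a₁⁻¹ * ·), mul_right_injective a₁⁻¹⟩ with heA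
          set eB : G ↪ G := ⟨(· * b₁⁻¹), mul_left_injective b₁⁻¹⟩ with heB
          have h1A' : (1 : G) ∈ A'.map eA :=
            Finset.mem_map.mpr ⟨a₁, ha₁, inv_mul_cancel a₁⟩
          have h1B' : (1 : G) ∈ B'.map eB :=
            Finset.mem_map.mpr ⟨b₁, hb₁, mul_inv_cancel b₁⟩
          have hcard' : #(A'.map eA) + #(B'.map eB) ≤ #A' + #B' := by
            rw [Finset.card_map, Finset.card_map]
          obtain ⟨at1, hat1, bt1, hbt1, hu⟩ :=
            ih (#A' + #B') (lt_of_lt_of_le hlt hcard) (A'.map eA) (B'.map eB) h1A' h1B' hcard'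
          obtain ⟨a, haA', rfl⟩ := Finset.mem_map.mp hat1
          obtain ⟨b, hbB', rfl⟩ := Finset.mem_map.mp hbt1
          have hu' : UniqueMul A' B' a b := by
            apply uniqueMul_of_map (g := a₁⁻¹) (k := b₁⁻¹)
            exact hu
          -- extend UniqueMul from A' B' to A B via degrees
          refine ⟨a, hA'sub haA', b, hB'sub hbB', fun x y hx hy hxy => ?_⟩
          have hdx : deg x ≤ dA := Finset.le_max' _ _ (Finset.mem_image_of_mem deg hx)
          have hdy : deg y ≤ dB := Finset.le_max' _ _ (Finset.mem_image_of_mem deg hy)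
          have hda : deg a = dA := (Finset.mem_filter.mp haA').2
          have hdb : deg b = dB := (Finset.mem_filter.mp hbB').2
          have hxH : x ∈ H := hmem x (Finset.mem_union_left _ hx)
          have hyH : y ∈ H := hmem y (Finset.mem_union_right _ hy)
          have haH : a ∈ H := hmem a (Finset.mem_union_left _ (hA'sub haA'))
          have hbH : b ∈ H := hmem b (Finset.mem_union_right _ (hB'sub hbB'))
          have hsum : deg x + deg y = dA + dB := by
            rw [← deg_mul x y hxH hyH, hxy, deg_mul a b haH hbH, hda, hdb]
          have hdx' : deg x = dA := by omega
          have hdy' : deg y = dB := by omega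
          exact hu' (Finset.mem_filter.mpr ⟨hx, hdx'⟩) (Finset.mem_filter.mpr ⟨hy, hdy'⟩) hxy
  constructor
  intro A B hA hB
  obtain ⟨a₀, ha₀⟩ := hA
  obtain ⟨b₀, hb₀⟩ := hB
  set eA : G ↪ G := ⟨(a₀⁻¹ * ·), mul_right_injective a₀⁻¹⟩ with heA
  set eB : G ↪ G := ⟨(· * b₀⁻¹), mul_left_injective b₀⁻¹⟩ with heB
  have h1A : (1 : G) ∈ A.map eA := Finset.mem_map.mpr ⟨a₀, ha₀, inv_mul_cancel a₀⟩
  have h1B : (1 : G) ∈ B.map eB := Finset.mem_map.mpr ⟨b₀, hb₀, mul_inv_cancel b₀⟩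
  obtain ⟨at1, hat1, bt1, hbt1, hu⟩ := core (#(A.map eA) + #(B.map eB)) (A.map eA) (B.map eB)
    h1A h1B le_rfl
  obtain ⟨a, haA, rfl⟩ := Finset.mem_map.mp hat1
  obtain ⟨b, hbB, rfl⟩ := Finset.mem_map.mp hbt1
  exact ⟨a, haA, b, hbB, uniqueMul_of_map (g := a₀⁻¹) (k := b₀⁻¹) hu⟩

/-- Higman's theorem: if `G` is locally indicable (every nontrivial finitely generated
subgroup admits an epimorphism onto `ℤ`), then the only elements of `ℤ[G]` having a
left inverse are the monomials `±g` with `g ∈ G`. -/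
theorem left_invertible_is_monomial_of_locallyIndicable {G : Type*} [Group G]
    (hG : ∀ H : Subgroup G, H ≠ ⊥ → H.FG →
      ∃ f : H →* Multiplicative ℤ, Function.Surjective f)
    (f s : MonoidAlgebra ℤ G) (h : s * f = 1) :
    ∃ g : G, f = MonoidAlgebra.single g 1 ∨ f = MonoidAlgebra.single g (-1) := by
  classical
  haveI : UniqueProds G := uniqueProds_of_locallyIndicable hG
  haveI : TwoUniqueProds G := UniqueProds.toTwoUniqueProds_of_group
  have hf0 : f ≠ 0 := by rintro rfl; rw [mul_zero] at h; exact one_ne_zero h.symm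
  have hs0 : s ≠ 0 := by rintro rfl; rw [zero_mul] at h; exact one_ne_zero h.symm
  have hone : ∀ x : G, (1 : MonoidAlgebra ℤ G).coeff x ≠ 0 → x = 1 := by
    intro x hx
    rw [MonoidAlgebra.one_def] at hx
    by_contra hne
    exact hx (Finsupp.single_eq_of_ne' (fun hh => hne hh.symm))
  have hcard : ¬ 1 < #s.coeff.support * #f.coeff.support := by
    intro hc
    obtain ⟨p1, hp1, p2, hp2, hne, hu1, hu2⟩ := TwoUniqueProds.uniqueMul_of_one_lt_card hc
    rw [Finset.mem_product] at hp1 hp2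
    have e1 : (s * f).coeff (p1.1 * p1.2) = s.coeff p1.1 * f.coeff p1.2 :=
      MonoidAlgebra.coeff_mul_mul_of_uniqueMul hu1
    have e2 : (s * f).coeff (p2.1 * p2.2) = s.coeff p2.1 * f.coeff p2.2 :=
      MonoidAlgebra.coeff_mul_mul_of_uniqueMul hu2
    have n1 : (s * f).coeff (p1.1 * p1.2) ≠ 0 := by
      rw [e1]
      exact mul_ne_zero (Finsupp.mem_support_iff.mp hp1.1) (Finsupp.mem_support_iff.mp hp1.2)
    have n2 : (s * f).coeff (p2.1 * p2.2) ≠ 0 := by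
      rw [e2]
      exact mul_ne_zero (Finsupp.mem_support_iff.mp hp2.1) (Finsupp.mem_support_iff.mp hp2.2)
    rw [h] at n1 n2
    have heq : p2.1 * p2.2 = p1.1 * p1.2 := (hone _ n2).trans (hone _ n1).symm
    obtain ⟨e1', e2'⟩ := hu1 hp2.1 hp2.2 heq
    exact hne (Prod.ext e1' e2').symm
  have hsne : #s.coeff.support ≠ 0 := by
    simpa [Finset.card_eq_zero, Finsupp.support_eq_empty, MonoidAlgebra.coeff_eq_zero] using hs0
  have hfne : #f.coeff.support ≠ 0 := by
    simpa [Finset.card_eq_zero, Finsupp.support_eq_empty, MonoidAlgebra.coeff_eq_zero] using hf0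
  have hf1 : #f.coeff.support = 1 := by
    have h1 : #s.coeff.support * #f.coeff.support ≤ 1 := Nat.not_lt.mp hcard
    have h2 : #f.coeff.support ≤ #s.coeff.support * #f.coeff.support :=
      Nat.le_mul_of_pos_left _ (Nat.pos_of_ne_zero hsne)
    omega
  obtain ⟨g, c, hc0, hfc⟩ := Finsupp.card_support_eq_one'.mp hf1
  obtain rfl : f = MonoidAlgebra.single g c := MonoidAlgebra.coeff_injective hfc
  have hcoef : s.coeff g⁻¹ * c = 1 := by
    have := MonoidAlgebra.coeff_mul_single_apply s c g 1
    rw [h, one_mul] at this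
    have h1 : (1 : MonoidAlgebra ℤ G).coeff 1 = 1 := by
      rw [MonoidAlgebra.one_def]; exact Finsupp.single_eq_same
    rw [h1] at this
    exact this.symm
  have : IsUnit c := IsUnit.of_mul_eq_one (a := c) (s.coeff g⁻¹) (by rw [mul_comm]; exact hcoef)
  rcases Int.isUnit_iff.mp this with rfl | rfl
  · exact ⟨g, Or.inl rfl⟩
  · exact ⟨g, Or.inr rfl⟩
end

section
/- Let G be a group such that ℤ[G] has no nonzero zero divisors, and let f, g ∈ ℤ[G] be nonzero. Then the Newton polytope of the product satisfies P(f·g) = P(f) + P(g), where P(h) ⊆ H₁(G;ℝ) is the convex hull of the images under the abelianization map ε : G → H₁(G;ℝ) of the group elements with nonzero coefficient in h, and + denotes Minkowski sum. -/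
open scoped TensorProduct Pointwise

/-- The first real homology `H₁(G;ℝ) = ℝ ⊗_ℤ G^{ab}` of a group `G`. -/
abbrev GroupH1 (G : Type*) [Group G] := ℝ ⊗[ℤ] (Additive (Abelianization G))

/-- The canonical map `ε : G → H₁(G;ℝ)`. -/
noncomputable def epsH1 (G : Type*) [Group G] (g : G) : GroupH1 G :=
  (1 : ℝ) ⊗ₜ[ℤ] (Additive.ofMul (Abelianization.of g))

/-- The Newton polytope `P(f) ⊆ H₁(G;ℝ)` of `f ∈ ℤ[G]`: the convex hull of the
images under `ε` of the group elements with nonzero coefficient in `f`. -/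
noncomputable def newtonPolytope {G : Type*} [Group G] (f : MonoidAlgebra ℤ G) :
    Set (GroupH1 G) :=
  convexHull ℝ (epsH1 G '' {g : G | f.coeff g ≠ 0})

lemma epsH1_mul {G : Type*} [Group G] (a b : G) :
    epsH1 G (a * b) = epsH1 G a + epsH1 G b := by
  simp [epsH1, map_mul, TensorProduct.tmul_add]

/-- Algebraic separation of a point from the convex hull of a finite set,
valid in an arbitrary real vector space (no topology needed). -/
lemma exists_sep_functional {V : Type*} [AddCommGroup V] [Module ℝ V]
    (S : Finset V) (x : V) (hx : x ∉ convexHull ℝ (S : Set V)) :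
    ∃ φ : V →ₗ[ℝ] ℝ, ∀ s ∈ S, φ s < φ x := by
  classical
  set W : Submodule ℝ V := Submodule.span ℝ (insert x (S : Set V)) with hW
  have hxW : x ∈ W := Submodule.subset_span (Set.mem_insert _ _)
  have hSW : ∀ s ∈ S, s ∈ W := fun s hs =>
    Submodule.subset_span (Set.mem_insert_of_mem _ hs)
  haveI : FiniteDimensional ℝ W :=
    FiniteDimensional.span_of_finite ℝ ((S.finite_toSet).insert x)
  obtain ⟨q, hq⟩ := Submodule.exists_isCompl W
  let π : V →ₗ[ℝ] W := W.linearProjOfIsCompl q hq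
  let e := (Module.finBasis ℝ W).equivFun
  let ρ : V →ₗ[ℝ] (Fin (Module.finrank ℝ W) → ℝ) := e.toLinearMap ∘ₗ π
  have hρ : ∀ v (hv : v ∈ W), ρ v = e ⟨v, hv⟩ := by
    intro v hv
    have : π v = ⟨v, hv⟩ := Submodule.linearProjOfIsCompl_apply_left hq ⟨v, hv⟩
    simp [ρ, this]
  have hconvW : convexHull ℝ (S : Set V) ⊆ (W : Set V) :=
    convexHull_min (fun s hs => hSW s hs) W.convex
  have hx' : ρ x ∉ convexHull ℝ (ρ '' (S : Set V)) := by
    intro hmem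
    rw [← ρ.image_convexHull] at hmem
    obtain ⟨y, hy, hyx⟩ := hmem
    have hyW : y ∈ W := hconvW hy
    rw [hρ y hyW, hρ x hxW] at hyx
    have : y = x := by
      have := e.injective hyx
      exact congrArg Subtype.val this
    exact hx (this ▸ hy)
  have hclosed : IsClosed (convexHull ℝ (ρ '' (S : Set V))) :=
    ((S.finite_toSet).image ρ).isClosed_convexHull (𝕜 := ℝ)
  obtain ⟨ψ, u, hu1, hu2⟩ :=
    geometric_hahn_banach_point_closed (convex_convexHull ℝ _) hclosed hx'
  refine ⟨-((ψ : (Fin (Module.finrank ℝ W) → ℝ) →ₗ[ℝ] ℝ) ∘ₗ ρ), fun s hs => ?_⟩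
  have h1 : u < ψ (ρ s) :=
    hu2 _ (subset_convexHull ℝ _ ⟨s, hs, rfl⟩)
  simp only [LinearMap.neg_apply, LinearMap.coe_comp, Function.comp_apply,
    ContinuousLinearMap.coe_coe, neg_lt_neg_iff]
  linarith

/-- The key algebraic lemma: top-degree parts multiply. -/
lemma exists_top_coeff {G : Type*} [Group G]
    [NoZeroDivisors (MonoidAlgebra ℤ G)]
    (w : G → ℝ) (hw : ∀ a b, w (a * b) = w a + w b)
    (f g : MonoidAlgebra ℤ G) (hf : f ≠ 0) (hg : g ≠ 0) :
    ∃ z : G, (f * g).coeff z ≠ 0 ∧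
      ∀ a ∈ f.coeff.support, ∀ b ∈ g.coeff.support, w a + w b ≤ w (z) := by
  classical
  have hfs : f.coeff.support.Nonempty := Finsupp.support_nonempty_iff.mpr (mt MonoidAlgebra.coeff_eq_zero.mp hf)
  have hgs : g.coeff.support.Nonempty := Finsupp.support_nonempty_iff.mpr (mt MonoidAlgebra.coeff_eq_zero.mp hg)
  obtain ⟨a0, ha0, ha0max⟩ := f.coeff.support.exists_max_image w hfs
  obtain ⟨b0, hb0, hb0max⟩ := g.coeff.support.exists_max_image w hgs
  set Mf := w a0 with hMf
  set Mg := w b0 with hMg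
  set ft : MonoidAlgebra ℤ G := MonoidAlgebra.ofCoeff (f.coeff.filter (fun a => w a = Mf)) with hft
  set gt : MonoidAlgebra ℤ G := MonoidAlgebra.ofCoeff (g.coeff.filter (fun a => w a = Mg)) with hgt
  set fr : MonoidAlgebra ℤ G := MonoidAlgebra.ofCoeff (f.coeff.filter (fun a => ¬ w a = Mf)) with hfr
  set gr : MonoidAlgebra ℤ G := MonoidAlgebra.ofCoeff (g.coeff.filter (fun a => ¬ w a = Mg)) with hgr
  have hfsplit : ft + fr = f := MonoidAlgebra.coeff_inj.mp (Finsupp.filter_pos_add_filter_neg f.coeff _)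
  have hgsplit : gt + gr = g := MonoidAlgebra.coeff_inj.mp (Finsupp.filter_pos_add_filter_neg g.coeff _)
  have hftsupp : ∀ a ∈ ft.coeff.support, w a = Mf := by
    intro a ha
    rw [hft, MonoidAlgebra.coeff_ofCoeff, Finsupp.support_filter, Finset.mem_filter] at ha
    exact ha.2
  have hgtsupp : ∀ b ∈ gt.coeff.support, w b = Mg := by
    intro b hb
    rw [hgt, MonoidAlgebra.coeff_ofCoeff, Finsupp.support_filter, Finset.mem_filter] at hb
    exact hb.2
  have hfrsupp : ∀ a ∈ fr.coeff.support, w a < Mf := by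
    intro a ha
    rw [hfr, MonoidAlgebra.coeff_ofCoeff, Finsupp.support_filter, Finset.mem_filter] at ha
    exact lt_of_le_of_ne (ha0max a ha.1) ha.2
  have hgrsupp : ∀ b ∈ gr.coeff.support, w b < Mg := by
    intro b hb
    rw [hgr, MonoidAlgebra.coeff_ofCoeff, Finsupp.support_filter, Finset.mem_filter] at hb
    exact lt_of_le_of_ne (hb0max b hb.1) hb.2
  have hftne : ft ≠ 0 := by
    intro h
    have : ft.coeff a0 = f.coeff a0 := Finsupp.filter_apply_pos _ _ rfl
    rw [h] at this
    exact (Finsupp.mem_support_iff.mp ha0) this.symm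
  have hgtne : gt ≠ 0 := by
    intro h
    have : gt.coeff b0 = g.coeff b0 := Finsupp.filter_apply_pos _ _ rfl
    rw [h] at this
    exact (Finsupp.mem_support_iff.mp hb0) this.symm
  have hprod : ft * gt ≠ 0 := mul_ne_zero hftne hgtne
  obtain ⟨z, hz⟩ := Finsupp.support_nonempty_iff.mpr (mt MonoidAlgebra.coeff_eq_zero.mp hprod)
  have hzmem := MonoidAlgebra.support_coeff_mul_subset ft gt hz
  obtain ⟨a, ha, b, hb, hab⟩ := Finset.mem_mul.mp hzmem
  have hwz : w z = Mf + Mg := by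
    rw [← hab, hw, hftsupp a ha, hgtsupp b hb]
  -- coefficient of f*g at z equals coefficient of ft*gt at z
  have key : (f * g).coeff z = (ft * gt).coeff z := by
    have hdecomp : f * g = ft * gt + (ft * gr + fr * g) := by
      rw [← hfsplit, ← hgsplit]
      noncomm_ring
    have h1 : (ft * gr).coeff z = 0 := by
      by_contra h
      have hz' : z ∈ (ft * gr).coeff.support := Finsupp.mem_support_iff.mpr h
      obtain ⟨a', ha', b', hb', hab'⟩ := Finset.mem_mul.mp
        (MonoidAlgebra.support_coeff_mul_subset ft gr hz')
      have : w z = w a' + w b' := by rw [← hab', hw]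
      rw [hwz, hftsupp a' ha'] at this
      have := hgrsupp b' hb'
      linarith
    have h2 : (fr * g).coeff z = 0 := by
      by_contra h
      have hz' : z ∈ (fr * g).coeff.support := Finsupp.mem_support_iff.mpr h
      obtain ⟨a', ha', b', hb', hab'⟩ := Finset.mem_mul.mp
        (MonoidAlgebra.support_coeff_mul_subset fr g hz')
      have : w z = w a' + w b' := by rw [← hab', hw]
      rw [hwz] at this
      have h3 := hfrsupp a' ha'
      have h4 : w b' ≤ Mg := hb0max b' hb'
      linarith
    have hstep : (f * g).coeff z = (ft * gt).coeff z + ((ft * gr).coeff z + (fr * g).coeff z) := by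
      rw [hdecomp]; rfl
    rw [hstep, h1, h2, add_zero, add_zero]
  refine ⟨z, ?_, ?_⟩
  · rw [key]; exact Finsupp.mem_support_iff.mp hz
  · intro a' ha' b' hb'
    rw [hwz]
    exact add_le_add (ha0max a' ha') (hb0max b' hb')

lemma support_set_eq {G : Type*} [Group G] (f : MonoidAlgebra ℤ G) :
    {g : G | f.coeff g ≠ 0} = (f.coeff.support : Set G) := by
  ext a; simp [Finsupp.mem_support_iff]

/-- If `ℤ[G]` has no nonzero zero divisors, then the Newton polytope is
multiplicative: `P(f·g) = P(f) + P(g)` (Minkowski sum) for nonzero `f, g ∈ ℤ[G]`. -/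
theorem newtonPolytope_mul {G : Type*} [Group G]
    [NoZeroDivisors (MonoidAlgebra ℤ G)]
    (f g : MonoidAlgebra ℤ G) (hf : f ≠ 0) (hg : g ≠ 0) :
    newtonPolytope (f * g) = newtonPolytope f + newtonPolytope g := by
  classical
  apply Set.Subset.antisymm
  · -- easy direction
    have h1 : epsH1 G '' {u : G | (f * g).coeff u ≠ 0} ⊆
        (epsH1 G '' {u : G | f.coeff u ≠ 0}) + (epsH1 G '' {u : G | g.coeff u ≠ 0}) := by
      rintro x ⟨u, hu, rfl⟩
      rw [support_set_eq] at hu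
      obtain ⟨a, ha, b, hb, hab⟩ := Finset.mem_mul.mp (MonoidAlgebra.support_coeff_mul_subset f g hu)
      refine ⟨epsH1 G a, ⟨a, ?_, rfl⟩, epsH1 G b, ⟨b, ?_, rfl⟩, ?_⟩
      · exact Finsupp.mem_support_iff.mp ha
      · exact Finsupp.mem_support_iff.mp hb
      · rw [← hab, epsH1_mul]
    calc newtonPolytope (f * g)
        ⊆ convexHull ℝ ((epsH1 G '' {u : G | f.coeff u ≠ 0}) + (epsH1 G '' {u : G | g.coeff u ≠ 0})) :=
          convexHull_mono h1
      _ = newtonPolytope f + newtonPolytope g := convexHull_add _ _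
  · -- hard direction
    rintro x hx
    by_contra hxn
    -- separating functional
    have hxn' : x ∉ convexHull ℝ (((f * g).coeff.support.image (epsH1 G) : Finset (GroupH1 G)) :
        Set (GroupH1 G)) := by
      rwa [newtonPolytope, support_set_eq, ← Finset.coe_image] at hxn
    obtain ⟨φ, hφ⟩ := exists_sep_functional _ x hxn'
    set w : G → ℝ := fun u => φ (epsH1 G u) with hwdef
    have hw : ∀ a b : G, w (a * b) = w a + w b := by
      intro a b
      simp [hwdef, epsH1_mul]
    obtain ⟨z, hz1, hz2⟩ := exists_top_coeff w hw f g hf hg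
    -- x = a + b with a ∈ P f, b ∈ P g
    obtain ⟨a, ha, b, hb, hab⟩ := Set.mem_add.mp hx
    obtain ⟨a0, ha0, ha0max⟩ := f.coeff.support.exists_max_image w
      (Finsupp.support_nonempty_iff.mpr (mt MonoidAlgebra.coeff_eq_zero.mp hf))
    obtain ⟨b0, hb0, hb0max⟩ := g.coeff.support.exists_max_image w
      (Finsupp.support_nonempty_iff.mpr (mt MonoidAlgebra.coeff_eq_zero.mp hg))
    have hφa : φ a ≤ w a0 := by
      have hsub : newtonPolytope f ⊆ {y | φ y ≤ w a0} := by
        apply convexHull_min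
        · rintro y ⟨u, hu, rfl⟩
          exact ha0max u (Finsupp.mem_support_iff.mpr hu)
        · exact convex_halfSpace_le φ.isLinear _
      exact hsub ha
    have hφb : φ b ≤ w b0 := by
      have hsub : newtonPolytope g ⊆ {y | φ y ≤ w b0} := by
        apply convexHull_min
        · rintro y ⟨u, hu, rfl⟩
          exact hb0max u (Finsupp.mem_support_iff.mpr hu)
        · exact convex_halfSpace_le φ.isLinear _
      exact hsub hb
    have hlt : φ (epsH1 G z) < φ x :=
      hφ _ (Finset.mem_image_of_mem _ (Finsupp.mem_support_iff.mpr hz1))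
    have hge : w a0 + w b0 ≤ w z := hz2 a0 ha0 b0 hb0
    have : φ x = φ a + φ b := by rw [← hab, map_add]
    have : φ x ≤ w z := by
      rw [this]
      calc φ a + φ b ≤ w a0 + w b0 := add_le_add hφa hφb
        _ ≤ w z := hge
    exact absurd hlt (not_lt.mpr this)
end

section
/- Let G be the Baumslag–Solitar group B = ⟨a, t | t⁻¹a²ta⁻¹⟩ and let φ : B → ℝ be the homomorphism with φ(t) = 1 and φ(a) = 0. Then the Fox derivative r_a = t⁻¹(1 + a) − 1 of the relator r = t⁻¹a²ta⁻¹ with respect to a is invertible in the Novikov–Sikorav completion Ẑ[B]_φ but is not invertible in Ẑ[B]_{−φ}. -/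
/-- The Novikov–Sikorav condition: a formal sum `f : G → ℤ` lies in the completion
`Ẑ[G]_ψ` iff for every `C ∈ ℝ` there are only finitely many `g` with `ψ(g) > C`
and `f g ≠ 0`. -/
def NovikovCond {G : Type*} [Group G] (ψ : G → ℝ) (f : G → ℤ) : Prop :=
  ∀ C : ℝ, {g : G | C < ψ g ∧ f g ≠ 0}.Finite

/-- Convolution product of formal sums on a group (the multiplication of the
Novikov–Sikorav completion). -/
noncomputable def novConv {G : Type*} [Group G] (f h : G → ℤ) : G → ℤ :=
  fun g => ∑ᶠ a : G, f a * h (a⁻¹ * g)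

/-- The relator `r = t⁻¹ a² t a⁻¹` of the Baumslag–Solitar group `B = B(2,1)`,
with `t = FreeGroup.of false` and `a = FreeGroup.of true`. -/
def bsRel : FreeGroup Bool :=
  (FreeGroup.of false)⁻¹ * FreeGroup.of true * FreeGroup.of true *
    FreeGroup.of false * (FreeGroup.of true)⁻¹

/-- The Baumslag–Solitar group `B = ⟨a, t | t⁻¹a²ta⁻¹⟩`. -/
abbrev BSGroup := PresentedGroup ({bsRel} : Set (FreeGroup Bool))

/-- `a ∈ B`. -/
def bsA : BSGroup := PresentedGroup.of true

/-- `t ∈ B`. -/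
def bsT : BSGroup := PresentedGroup.of false

/-- The Fox derivative `r_a = t⁻¹ + t⁻¹a - 1 = t⁻¹(1 + a) - 1 ∈ ℤ[B]` of the relator. -/
noncomputable def bsRa : MonoidAlgebra ℤ BSGroup :=
  MonoidAlgebra.of ℤ BSGroup bsT⁻¹ * (1 + MonoidAlgebra.of ℤ BSGroup bsA) - 1

set_option linter.unusedSectionVars false


-- representation
noncomputable def bsF : Bool → Equiv.Perm ℝ := fun b =>
  if b then Equiv.addRight (1:ℝ) else Equiv.mulLeft₀ (2:ℝ) two_ne_zero

lemma bsF_rel : ∀ r ∈ ({bsRel} : Set (FreeGroup Bool)), FreeGroup.lift bsF r = 1 := by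
  intro r hr
  rw [Set.mem_singleton_iff] at hr
  subst hr
  have h2 : (2:ℝ) ≠ 0 := two_ne_zero
  ext x
  simp [bsRel, bsF, Equiv.Perm.mul_apply, Equiv.Perm.inv_def, Equiv.mulLeft₀,
    Equiv.coe_addRight]
  ring

noncomputable def bsρ : BSGroup →* Equiv.Perm ℝ := PresentedGroup.toGroup bsF_rel

lemma bsρ_apow (k : ℕ) : bsρ (bsA ^ k) = Equiv.addRight (k:ℝ) := by
  rw [map_pow]
  have : bsρ bsA = Equiv.addRight (1:ℝ) := by
    simp [bsρ, bsA, bsF, PresentedGroup.toGroup.of]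
  rw [this, Equiv.nsmul_addRight]
  norm_num

lemma bsρ_ainvpow (k : ℕ) : bsρ (bsA⁻¹ ^ k) = Equiv.addRight (-(k:ℝ)) := by
  rw [map_pow, map_inv]
  have : bsρ bsA = Equiv.addRight (1:ℝ) := by
    simp [bsρ, bsA, bsF, PresentedGroup.toGroup.of]
  rw [this, Equiv.neg_addRight, Equiv.nsmul_addRight]
  norm_num

lemma addRight_injective : Function.Injective (Equiv.addRight : ℝ → Equiv.Perm ℝ) := by
  intro x y h
  have := congrArg (fun e : Equiv.Perm ℝ => e 0) h
  simpa using this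

lemma apow_inj {k j : ℕ} (h : bsA ^ k = bsA ^ j) : k = j := by
  have e : Equiv.addRight (k:ℝ) = Equiv.addRight (j:ℝ) := by
    rw [← bsρ_apow k, ← bsρ_apow j, h]
  exact_mod_cast addRight_injective e

lemma ainvpow_inj {k j : ℕ} (h : bsA⁻¹ ^ k = bsA⁻¹ ^ j) : k = j := by
  have e : Equiv.addRight (-(k:ℝ)) = Equiv.addRight (-(j:ℝ)) := by
    rw [← bsρ_ainvpow k, ← bsρ_ainvpow j, h]
  have h2 : (k:ℝ) = j := by have := addRight_injective e; linarith
  exact_mod_cast h2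

lemma apow_ne_ainvpow (k j : ℕ) : bsA ^ (k+1) ≠ bsA⁻¹ ^ j := by
  intro h
  have e : Equiv.addRight (((k+1:ℕ)):ℝ) = Equiv.addRight (-(j:ℝ)) := by
    rw [← bsρ_apow (k+1), ← bsρ_ainvpow j, h]
  have := addRight_injective e
  have h0 : (0:ℝ) ≤ j := Nat.cast_nonneg j
  rw [Nat.cast_add, Nat.cast_one] at this
  linarith

lemma bsA_ne_one : bsA ≠ 1 := by
  intro h
  have : bsA ^ 1 = bsA ^ 0 := by simpa using h
  simpa using apow_inj this

-- relator
lemma bs_rel1 : bsT⁻¹ * bsA * bsA * bsT * bsA⁻¹ = 1 := by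
  have h1 : PresentedGroup.mk ({bsRel} : Set (FreeGroup Bool)) bsRel = 1 := by
    apply (QuotientGroup.eq_one_iff _).mpr
    exact Subgroup.subset_normalClosure (Set.mem_singleton _)
  refine Eq.trans ?_ h1
  rfl

lemma bs_conj : bsT * bsA * bsT⁻¹ = bsA * bsA := by
  have h2 : bsT⁻¹ * (bsA * bsA) * bsT = bsA := by
    have := congrArg (· * bsA) bs_rel1
    simpa [mul_assoc] using this
  have := congrArg (fun x => bsT * x * bsT⁻¹) h2
  rw [← this]
  group

lemma t_conj_apow (m : ℕ) : bsT * bsA ^ m * bsT⁻¹ = bsA ^ (2*m) := by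
  rw [← conj_pow, bs_conj, ← sq, ← pow_mul]

lemma tn_conj_a (n : ℕ) : bsT ^ n * bsA * bsT⁻¹ ^ n = bsA ^ (2^n) := by
  induction n with
  | zero => simp
  | succ n ih =>
    have : bsT ^ (n+1) * bsA * bsT⁻¹ ^ (n+1) = bsT * (bsT ^ n * bsA * bsT⁻¹ ^ n) * bsT⁻¹ := by
      group
    rw [this, ih, t_conj_apow, pow_succ, Nat.mul_comm]

/-- `s n m = t⁻ⁿ aᵐ`. -/
def bsS (n m : ℕ) : BSGroup := bsT⁻¹ ^ n * bsA ^ m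

lemma bsS_zero : bsS 0 0 = 1 := by simp [bsS]

lemma bsS_mul_tinv (n m : ℕ) : bsS n m * bsT⁻¹ = bsS (n+1) (2*m) := by
  unfold bsS
  rw [← t_conj_apow]
  group

lemma bsS_mul_tinv_a (n m : ℕ) : bsS n m * bsT⁻¹ * bsA = bsS (n+1) (2*m+1) := by
  rw [bsS_mul_tinv]
  unfold bsS
  rw [pow_succ, mul_assoc]
  rw [pow_succ]

lemma tinv_mul_bsS (n m : ℕ) : bsT⁻¹ * bsS n m = bsS (n+1) m := by
  unfold bsS
  rw [pow_succ']
  group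

lemma tinv_a_mul_bsS (n m : ℕ) : bsT⁻¹ * bsA * bsS n m = bsS (n+1) (2^n + m) := by
  unfold bsS
  rw [pow_add (bsA) (2^n) m, ← tn_conj_a]
  group

section Phi
variable {φ : BSGroup → ℝ} (hφ : ∀ x y : BSGroup, φ (x * y) = φ x + φ y)
    (hφt : φ bsT = 1) (hφa : φ bsA = 0)
include hφ

lemma phi_one : φ 1 = 0 := by
  have := hφ 1 1
  simp at this
  linarith

lemma phi_inv (x : BSGroup) : φ x⁻¹ = -φ x := by
  have := hφ x⁻¹ x
  rw [inv_mul_cancel, phi_one hφ] at this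
  linarith

lemma phi_pow (x : BSGroup) (n : ℕ) : φ (x ^ n) = n * φ x := by
  induction n with
  | zero => simpa using phi_one hφ
  | succ n ih => rw [pow_succ, hφ, ih]; push_cast; ring

include hφt hφa

lemma phi_bsS (n m : ℕ) : φ (bsS n m) = -n := by
  unfold bsS
  rw [hφ, phi_pow hφ, phi_pow hφ, phi_inv hφ, hφt, hφa]
  ring

lemma bsS_inj {n m n' m' : ℕ} (h : bsS n m = bsS n' m') : n = n' ∧ m = m' := by
  have h1 : φ (bsS n m) = φ (bsS n' m') := by rw [h]
  rw [phi_bsS hφ hφt hφa, phi_bsS hφ hφt hφa] at h1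
  have hn : n = n' := by exact_mod_cast neg_injective h1
  subst hn
  refine ⟨rfl, apow_inj ?_⟩
  exact mul_left_cancel h

lemma bsS_eq_one {n m : ℕ} (h : bsS n m = 1) : n = 0 ∧ m = 0 := by
  have := bsS_inj hφ hφt hφa (h.trans bsS_zero.symm)
  omega

lemma phi_t_ne : ∀ n m : ℕ, bsT ≠ bsS n m := by
  intro n m h
  have := congrArg φ h
  rw [hφt, phi_bsS hφ hφt hφa] at this
  have : (0:ℝ) ≤ n := Nat.cast_nonneg n
  linarith [this]

lemma phi_ainv_t_ne : ∀ n m : ℕ, bsA⁻¹ * bsT ≠ bsS n m := by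
  intro n m h
  have := congrArg φ h
  rw [hφ, phi_inv hφ, hφa, hφt, phi_bsS hφ hφt hφa] at this
  have h2 : (0:ℝ) ≤ n := Nat.cast_nonneg n
  linarith

end Phi


lemma bsRa_eq : bsRa = MonoidAlgebra.single bsT⁻¹ 1
    + MonoidAlgebra.single (bsT⁻¹ * bsA) 1 - MonoidAlgebra.single (1:BSGroup) 1 := by
  unfold bsRa
  rw [MonoidAlgebra.of_apply, MonoidAlgebra.of_apply, mul_add, mul_one,
    MonoidAlgebra.single_mul_single, MonoidAlgebra.one_def, one_mul]

lemma bsRa_apply [DecidableEq BSGroup] (y : BSGroup) : (⇑bsRa.coeff) y =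
    (if bsT⁻¹ = y then 1 else 0) + (if bsT⁻¹ * bsA = y then 1 else 0)
      - (if (1:BSGroup) = y then 1 else 0) := by
  rw [bsRa_eq]
  rw [MonoidAlgebra.coeff_sub, MonoidAlgebra.coeff_add, MonoidAlgebra.coeff_single,
    MonoidAlgebra.coeff_single, MonoidAlgebra.coeff_single, Finsupp.sub_apply, Finsupp.add_apply, Finsupp.single_apply, Finsupp.single_apply,
    Finsupp.single_apply]

lemma inv_mul_solve {x g c : BSGroup} (h : c = x⁻¹ * g) : x = g * c⁻¹ := by
  have h2 : g = x * c := by rw [h]; group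
  rw [h2]; group

lemma tinv_ne_tinva : bsT⁻¹ ≠ bsT⁻¹ * bsA := by
  intro h
  exact bsA_ne_one (mul_left_cancel (a := bsT⁻¹) (by simpa using h)).symm

section Phi2
variable {φ : BSGroup → ℝ} (hφ : ∀ x y : BSGroup, φ (x * y) = φ x + φ y)
    (hφt : φ bsT = 1) (hφa : φ bsA = 0)
include hφ hφt

lemma bsT_ne_one : bsT ≠ 1 := by
  intro h
  have := congrArg φ h
  rw [hφt, phi_one hφ] at this
  norm_num at this

lemma tinv_ne_one : bsT⁻¹ ≠ 1 := by
  intro h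
  exact bsT_ne_one hφ hφt (by rw [← inv_inv bsT, h, inv_one])

include hφa

lemma tinva_ne_one : bsT⁻¹ * bsA ≠ 1 := by
  intro h
  have := congrArg φ h
  rw [hφ, phi_inv hφ, hφt, hφa, phi_one hφ] at this
  norm_num at this

lemma ainvt_ne_one : bsA⁻¹ * bsT ≠ 1 := by
  intro h
  have := congrArg φ h
  rw [hφ, phi_inv hφ, hφt, hφa, phi_one hφ] at this
  norm_num at this

variable [DecidableEq BSGroup]

lemma rv1 : (⇑bsRa.coeff) bsT⁻¹ = 1 := by
  clear hφa
  rw [bsRa_apply, if_pos rfl, if_neg (fun h => tinv_ne_tinva h.symm),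
    if_neg (fun h => tinv_ne_one hφ hφt h.symm)]
  norm_num

lemma rv2 : (⇑bsRa.coeff) (bsT⁻¹ * bsA) = 1 := by
  rw [bsRa_apply, if_pos rfl, if_neg tinv_ne_tinva,
    if_neg (fun h => tinva_ne_one hφ hφt hφa h.symm)]
  norm_num

lemma rv3 : (⇑bsRa.coeff) (1 : BSGroup) = -1 := by
  rw [bsRa_apply, if_pos rfl, if_neg (tinv_ne_one hφ hφt),
    if_neg (tinva_ne_one hφ hφt hφa)]
  norm_num

lemma conv_left (f : BSGroup → ℤ) (g : BSGroup) :
    novConv f (⇑bsRa.coeff) g = f (g * bsT) + f (g * (bsA⁻¹ * bsT)) - f g := by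
  have hsupp : (Function.support fun x => f x * (⇑bsRa.coeff) (x⁻¹ * g)) ⊆
      ↑({g * bsT, g * (bsA⁻¹ * bsT), g} : Finset BSGroup) := by
    intro x hx
    have hr : (⇑bsRa.coeff) (x⁻¹ * g) ≠ 0 := by
      intro h0
      exact hx (by simp [h0])
    rw [bsRa_apply] at hr
    simp only [Finset.coe_insert, Set.mem_insert_iff, Finset.coe_singleton,
      Set.mem_singleton_iff]
    by_contra hc
    push_neg at hc
    obtain ⟨h1, h2, h3⟩ := hc
    apply hr
    rw [if_neg, if_neg, if_neg]
    · norm_num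
    · intro h; exact h3 (by simpa using inv_mul_solve h)
    · intro h
      apply h2
      rw [inv_mul_solve h, mul_inv_rev, inv_inv]
    · intro h
      apply h1
      rw [inv_mul_solve h, inv_inv]
  have dAB : g * bsT ≠ g * (bsA⁻¹ * bsT) := by
    intro h
    have h2 : (1:BSGroup) * bsT = bsA⁻¹ * bsT := by simpa using mul_left_cancel h
    have h3 : (1:BSGroup) = bsA⁻¹ := mul_right_cancel h2
    exact bsA_ne_one (by rw [← inv_inv bsA, ← h3, inv_one])
  have dAC : g * bsT ≠ g := by
    intro h
    exact bsT_ne_one hφ hφt (by rwa [mul_eq_left] at h)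
  have dBC : g * (bsA⁻¹ * bsT) ≠ g := by
    intro h
    exact ainvt_ne_one hφ hφt hφa (by rwa [mul_eq_left] at h)
  rw [novConv, finsum_eq_sum_of_support_subset _ hsupp]
  rw [Finset.sum_insert (by simp [dAB, dAC]), Finset.sum_insert (by simp [dBC]),
    Finset.sum_singleton]
  have e1 : (g * bsT)⁻¹ * g = bsT⁻¹ := by group
  have e2 : (g * (bsA⁻¹ * bsT))⁻¹ * g = bsT⁻¹ * bsA := by group
  have e3 : g⁻¹ * g = 1 := by group
  rw [e1, e2, e3, rv1 hφ hφt hφa, rv2 hφ hφt hφa, rv3 hφ hφt hφa]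
  ring

lemma conv_right (f : BSGroup → ℤ) (g : BSGroup) :
    novConv (⇑bsRa.coeff) f g = f (bsT * g) + f (bsA⁻¹ * (bsT * g)) - f g := by
  have hsupp : (Function.support fun x => (⇑bsRa.coeff) x * f (x⁻¹ * g)) ⊆
      ↑({bsT⁻¹, bsT⁻¹ * bsA, 1} : Finset BSGroup) := by
    intro x hx
    have hr : (⇑bsRa.coeff) x ≠ 0 := by
      intro h0
      exact hx (by simp [h0])
    rw [bsRa_apply] at hr
    simp only [Finset.coe_insert, Set.mem_insert_iff, Finset.coe_singleton,
      Set.mem_singleton_iff]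
    by_contra hc
    push_neg at hc
    obtain ⟨h1, h2, h3⟩ := hc
    apply hr
    rw [if_neg (fun h => h1 h.symm), if_neg (fun h => h2 h.symm), if_neg (fun h => h3 h.symm)]
    norm_num
  have dAB : bsT⁻¹ ≠ bsT⁻¹ * bsA := tinv_ne_tinva
  have dAC : bsT⁻¹ ≠ (1:BSGroup) := tinv_ne_one hφ hφt
  have dBC : bsT⁻¹ * bsA ≠ (1:BSGroup) := tinva_ne_one hφ hφt hφa
  rw [novConv, finsum_eq_sum_of_support_subset _ hsupp]
  rw [Finset.sum_insert (by simp [dAB, dAC]), Finset.sum_insert (by simp [dBC]),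
    Finset.sum_singleton]
  have e1 : (bsT⁻¹)⁻¹ * g = bsT * g := by group
  have e2 : (bsT⁻¹ * bsA)⁻¹ * g = bsA⁻¹ * (bsT * g) := by group
  have e3 : (1:BSGroup)⁻¹ * g = g := by group
  rw [e1, e2, e3, rv1 hφ hφt hφa, rv2 hφ hφt hφa, rv3 hφ hφt hφa]
  ring

end Phi2

def bsSet : Set BSGroup := {g | ∃ n m : ℕ, m < 2^n ∧ g = bsS n m}

open Classical in
noncomputable def bsH0 : BSGroup → ℤ := fun g => if g ∈ bsSet then -1 else 0

lemma mem_t (g : BSGroup) : g * bsT ∈ bsSet ↔ ∃ n m : ℕ, m < 2^n ∧ g = bsS (n+1) (2*m) := by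
  constructor
  · rintro ⟨n, m, hm, he⟩
    exact ⟨n, m, hm, by rw [← bsS_mul_tinv, ← he]; group⟩
  · rintro ⟨n, m, hm, rfl⟩
    refine ⟨n, m, hm, ?_⟩
    rw [← bsS_mul_tinv]; group

lemma mem_at (g : BSGroup) : g * (bsA⁻¹ * bsT) ∈ bsSet ↔
    ∃ n m : ℕ, m < 2^n ∧ g = bsS (n+1) (2*m+1) := by
  constructor
  · rintro ⟨n, m, hm, he⟩
    exact ⟨n, m, hm, by rw [← bsS_mul_tinv_a, ← he]; group⟩
  · rintro ⟨n, m, hm, rfl⟩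
    refine ⟨n, m, hm, ?_⟩
    rw [← bsS_mul_tinv_a]; group

lemma mem_t' (g : BSGroup) : bsT * g ∈ bsSet ↔ ∃ n m : ℕ, m < 2^n ∧ g = bsS (n+1) m := by
  constructor
  · rintro ⟨n, m, hm, he⟩
    exact ⟨n, m, hm, by rw [← tinv_mul_bsS, ← he]; group⟩
  · rintro ⟨n, m, hm, rfl⟩
    refine ⟨n, m, hm, ?_⟩
    rw [← tinv_mul_bsS]; group

lemma mem_at' (g : BSGroup) : bsA⁻¹ * (bsT * g) ∈ bsSet ↔
    ∃ n m : ℕ, m < 2^n ∧ g = bsS (n+1) (2^n+m) := by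
  constructor
  · rintro ⟨n, m, hm, he⟩
    refine ⟨n, m, hm, ?_⟩
    rw [← tinv_a_mul_bsS, ← he]; group
  · rintro ⟨n, m, hm, rfl⟩
    refine ⟨n, m, hm, ?_⟩
    rw [← tinv_a_mul_bsS]; group

section Phi3
variable {φ : BSGroup → ℝ} (hφ : ∀ x y : BSGroup, φ (x * y) = φ x + φ y)
    (hφt : φ bsT = 1) (hφa : φ bsA = 0) [DecidableEq BSGroup]
include hφ hφt hφa

lemma h0_nov : NovikovCond φ bsH0 := by
  intro C
  obtain ⟨N, hN⟩ := exists_nat_gt (-C)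
  apply Set.Finite.subset (Set.Finite.image (f := fun p : ℕ × ℕ => bsS p.1 p.2)
    (Set.Finite.prod (Set.finite_Iio N) (Set.finite_Iio (2^N))))
  rintro g ⟨hC, hne⟩
  have hg : g ∈ bsSet := by
    by_contra hc
    simp only [bsH0, if_neg hc] at hne
    exact hne rfl
  obtain ⟨n, m, hm, rfl⟩ := hg
  have hn : n < N := by
    rw [phi_bsS hφ hφt hφa] at hC
    have : (n:ℝ) < N := by linarith
    exact_mod_cast this
  exact ⟨(n, m), ⟨hn, lt_of_lt_of_le hm (Nat.pow_le_pow_right (by norm_num) hn.le)⟩, rfl⟩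

lemma leftKey (g : BSGroup) :
    bsH0 (g * bsT) + bsH0 (g * (bsA⁻¹ * bsT)) - bsH0 g = if g = 1 then 1 else 0 := by
  classical
  by_cases hg : g ∈ bsSet
  · obtain ⟨n, m, hm, rfl⟩ := hg
    rcases n with _ | n₀
    · have hm0 : m = 0 := by simpa using Nat.lt_one_iff.mp (by simpa using hm)
      subst hm0
      have hS : bsS 0 0 ∈ bsSet := ⟨0, 0, by norm_num, rfl⟩
      have hT : bsS 0 0 * bsT ∉ bsSet := by
        rintro ⟨n', m', _, he⟩
        exact phi_t_ne hφ hφt hφa n' m' (by rw [← he, bsS_zero, one_mul])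
      have hAT : bsS 0 0 * (bsA⁻¹ * bsT) ∉ bsSet := by
        rintro ⟨n', m', _, he⟩
        exact phi_ainv_t_ne hφ hφt hφa n' m' (by rw [← he, bsS_zero, one_mul])
      simp only [bsH0, if_neg hT, if_neg hAT, if_pos hS, if_pos bsS_zero]
      norm_num
    · have hne1 : bsS (n₀+1) m ≠ 1 := fun h => by
        have := bsS_eq_one hφ hφt hφa h; omega
      have hS : bsS (n₀+1) m ∈ bsSet := ⟨n₀+1, m, hm, rfl⟩
      have hpow : 2^(n₀+1) = 2 * 2^n₀ := by rw [pow_succ]; ring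
      rcases Nat.even_or_odd m with ⟨q, hq⟩ | ⟨q, hq⟩
      · have hq' : m = 2*q := by omega
        subst hq'
        have hqlt : q < 2^n₀ := by omega
        have hT : bsS (n₀+1) (2*q) * bsT ∈ bsSet := (mem_t _).mpr ⟨n₀, q, hqlt, rfl⟩
        have hAT : bsS (n₀+1) (2*q) * (bsA⁻¹ * bsT) ∉ bsSet := by
          intro hmem
          obtain ⟨n', m', hm', he⟩ := (mem_at _).mp hmem
          obtain ⟨h1, h2⟩ := bsS_inj hφ hφt hφa he
          omega
        simp only [bsH0, if_pos hT, if_neg hAT, if_pos hS, if_neg hne1]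
        norm_num
      · subst hq
        have hqlt : q < 2^n₀ := by omega
        have hAT : bsS (n₀+1) (2*q+1) * (bsA⁻¹ * bsT) ∈ bsSet :=
          (mem_at _).mpr ⟨n₀, q, hqlt, rfl⟩
        have hT : bsS (n₀+1) (2*q+1) * bsT ∉ bsSet := by
          intro hmem
          obtain ⟨n', m', hm', he⟩ := (mem_t _).mp hmem
          obtain ⟨h1, h2⟩ := bsS_inj hφ hφt hφa he
          omega
        simp only [bsH0, if_neg hT, if_pos hAT, if_pos hS, if_neg hne1]
        norm_num
  · have hg1 : g ≠ 1 := fun h => hg (by rw [h]; exact ⟨0, 0, by norm_num, bsS_zero.symm⟩)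
    have hT : g * bsT ∉ bsSet := by
      intro hmem
      obtain ⟨n, m, hm, rfl⟩ := (mem_t _).mp hmem
      exact hg ⟨n+1, 2*m, by rw [pow_succ]; omega, rfl⟩
    have hAT : g * (bsA⁻¹ * bsT) ∉ bsSet := by
      intro hmem
      obtain ⟨n, m, hm, rfl⟩ := (mem_at _).mp hmem
      exact hg ⟨n+1, 2*m+1, by rw [pow_succ]; omega, rfl⟩
    simp only [bsH0, if_neg hT, if_neg hAT, if_neg hg, if_neg hg1]
    norm_num

lemma rightKey (g : BSGroup) :
    bsH0 (bsT * g) + bsH0 (bsA⁻¹ * (bsT * g)) - bsH0 g = if g = 1 then 1 else 0 := by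
  classical
  by_cases hg : g ∈ bsSet
  · obtain ⟨n, m, hm, rfl⟩ := hg
    rcases n with _ | n₀
    · have hm0 : m = 0 := by simpa using Nat.lt_one_iff.mp (by simpa using hm)
      subst hm0
      have hS : bsS 0 0 ∈ bsSet := ⟨0, 0, by norm_num, rfl⟩
      have hT : bsT * bsS 0 0 ∉ bsSet := by
        rintro ⟨n', m', _, he⟩
        exact phi_t_ne hφ hφt hφa n' m' (by rw [← he, bsS_zero, mul_one])
      have hAT : bsA⁻¹ * (bsT * bsS 0 0) ∉ bsSet := by
        rintro ⟨n', m', _, he⟩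
        refine phi_ainv_t_ne hφ hφt hφa n' m' ?_
        rw [← he, bsS_zero, mul_one]
      simp only [bsH0, if_neg hT, if_neg hAT, if_pos hS, if_pos bsS_zero]
      norm_num
    · have hne1 : bsS (n₀+1) m ≠ 1 := fun h => by
        have := bsS_eq_one hφ hφt hφa h; omega
      have hS : bsS (n₀+1) m ∈ bsSet := ⟨n₀+1, m, hm, rfl⟩
      have hpow : 2^(n₀+1) = 2 * 2^n₀ := by rw [pow_succ]; ring
      by_cases hsmall : m < 2^n₀
      · have hT : bsT * bsS (n₀+1) m ∈ bsSet := (mem_t' _).mpr ⟨n₀, m, hsmall, rfl⟩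
        have hAT : bsA⁻¹ * (bsT * bsS (n₀+1) m) ∉ bsSet := by
          intro hmem
          obtain ⟨n', m', hm', he⟩ := (mem_at' _).mp hmem
          obtain ⟨h1, h2⟩ := bsS_inj hφ hφt hφa he
          have hn' : n' = n₀ := by omega
          subst hn'
          omega
        simp only [bsH0, if_pos hT, if_neg hAT, if_pos hS, if_neg hne1]
        norm_num
      · push_neg at hsmall
        have hAT : bsA⁻¹ * (bsT * bsS (n₀+1) m) ∈ bsSet := by
          refine (mem_at' _).mpr ⟨n₀, m - 2^n₀, by omega, ?_⟩
          congr 1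
          omega
        have hT : bsT * bsS (n₀+1) m ∉ bsSet := by
          intro hmem
          obtain ⟨n', m', hm', he⟩ := (mem_t' _).mp hmem
          obtain ⟨h1, h2⟩ := bsS_inj hφ hφt hφa he
          have hn' : n' = n₀ := by omega
          subst hn'
          omega
        simp only [bsH0, if_neg hT, if_pos hAT, if_pos hS, if_neg hne1]
        norm_num
  · have hg1 : g ≠ 1 := fun h => hg (by rw [h]; exact ⟨0, 0, by norm_num, bsS_zero.symm⟩)
    have hT : bsT * g ∉ bsSet := by
      intro hmem
      obtain ⟨n, m, hm, rfl⟩ := (mem_t' _).mp hmem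
      exact hg ⟨n+1, m, by rw [pow_succ]; omega, rfl⟩
    have hAT : bsA⁻¹ * (bsT * g) ∉ bsSet := by
      intro hmem
      obtain ⟨n, m, hm, rfl⟩ := (mem_at' _).mp hmem
      exact hg ⟨n+1, 2^n+m, by rw [pow_succ]; omega, rfl⟩
    simp only [bsH0, if_neg hT, if_neg hAT, if_neg hg, if_neg hg1]
    norm_num

end Phi3

section Phi4
variable {φ : BSGroup → ℝ} (hφ : ∀ x y : BSGroup, φ (x * y) = φ x + φ y)
    (hφt : φ bsT = 1) (hφa : φ bsA = 0) [DecidableEq BSGroup]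
include hφ hφt hφa

lemma no_inverse (h : BSGroup → ℤ) (hN : NovikovCond (fun g => -φ g) h)
    (h2 : novConv (⇑bsRa.coeff) h = fun g => if g = 1 then 1 else 0) : False := by
  have key : ∀ g, h (bsT * g) + h (bsA⁻¹ * (bsT * g)) - h g = (if g = 1 then 1 else 0) := by
    intro g
    rw [← conv_right hφ hφt hφa h g, h2]
  -- h is nonzero somewhere
  have hex : ∃ g, h g ≠ 0 := by
    by_contra hall
    push_neg at hall
    have := key 1
    simp [hall] at this
  obtain ⟨g₀, hg₀⟩ := hex
  -- find a maximizer of -φ on the support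
  set s : Finset BSGroup := (hN (-φ g₀ - 1)).toFinset with hs
  have hg₀s : g₀ ∈ s := by
    rw [hs, Set.Finite.mem_toFinset]
    refine ⟨?_, hg₀⟩
    show -φ g₀ - 1 < -φ g₀
    linarith
  obtain ⟨u, hus, humax⟩ := Finset.exists_max_image s (fun g => -φ g) ⟨g₀, hg₀s⟩
  have hu_ne : h u ≠ 0 := by
    rw [hs, Set.Finite.mem_toFinset] at hus
    exact hus.2
  have hmax : ∀ v, h v ≠ 0 → -φ v ≤ -φ u := by
    intro v hv
    by_cases hc : -φ g₀ - 1 < -φ v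
    · exact humax v (by rw [hs, Set.Finite.mem_toFinset]; exact ⟨hc, hv⟩)
    · push_neg at hc
      have h1 : -φ g₀ ≤ -φ u := humax g₀ hg₀s
      linarith
  -- the key relation at the top level
  have rel : ∀ v : BSGroup, -φ u ≤ -φ v → h v + h (bsA⁻¹ * v) = (if v = bsT then 1 else 0) := by
    intro v hv
    have hk := key (bsT⁻¹ * v)
    have e1 : bsT * (bsT⁻¹ * v) = v := by group
    rw [e1] at hk
    have hz : h (bsT⁻¹ * v) = 0 := by
      by_contra hnz
      have h1 := hmax _ hnz
      have h3 : φ (bsT⁻¹ * v) = -1 + φ v := by rw [hφ, phi_inv hφ, hφt]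
      rw [h3] at h1
      linarith
    rw [hz, sub_zero] at hk
    have hiff : (bsT⁻¹ * v = 1) ↔ (v = bsT) := by
      constructor
      · intro hh
        exact (inv_mul_eq_one.mp hh).symm
      · intro hh
        rw [hh]; group
    rw [if_congr hiff rfl rfl] at hk
    exact hk
  have hphiAinv : ∀ k : ℕ, φ (bsA⁻¹ ^ k * u) = φ u := by
    intro k
    rw [hφ, phi_pow hφ, phi_inv hφ, hφa]; ring
  have hphiA : ∀ k : ℕ, φ (bsA ^ k * u) = φ u := by
    intro k
    rw [hφ, phi_pow hφ, hφa]; ring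
  by_cases hbad : ∃ k : ℕ, bsA⁻¹ ^ k * u = bsT
  · -- upward chain
    obtain ⟨k₀, hk₀⟩ := hbad
    have hchain : ∀ k : ℕ, h (bsA ^ k * u) ≠ 0 := by
      intro k
      induction k with
      | zero => simpa using hu_ne
      | succ k ih =>
        have hrel := rel (bsA ^ (k+1) * u) (le_of_eq (by rw [hphiA]))
        have hne : bsA ^ (k+1) * u ≠ bsT := by
          intro hh
          rw [← hk₀] at hh
          exact apow_ne_ainvpow k k₀ (mul_right_cancel hh)
        rw [if_neg hne] at hrel
        have e : bsA⁻¹ * (bsA ^ (k+1) * u) = bsA ^ k * u := by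
          rw [pow_succ']; group
        rw [e] at hrel
        intro h0
        rw [h0, zero_add] at hrel
        exact ih hrel
    have hinj : Function.Injective (fun k : ℕ => bsA ^ k * u) := by
      intro k j hkj
      simp only at hkj
      exact apow_inj (mul_right_cancel hkj)
    have hinf : {g : BSGroup | -φ u - 1 < -φ g ∧ h g ≠ 0}.Infinite :=
      Set.infinite_of_injective_forall_mem hinj
        (fun k => ⟨by rw [hphiA]; linarith, hchain k⟩)
    exact hinf (hN (-φ u - 1))
  · -- downward chain
    push_neg at hbad
    have hchain : ∀ k : ℕ, h (bsA⁻¹ ^ k * u) ≠ 0 := by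
      intro k
      induction k with
      | zero => simpa using hu_ne
      | succ k ih =>
        have hrel := rel (bsA⁻¹ ^ k * u) (le_of_eq (by rw [hphiAinv]))
        rw [if_neg (hbad k)] at hrel
        have e : bsA⁻¹ * (bsA⁻¹ ^ k * u) = bsA⁻¹ ^ (k+1) * u := by
          rw [pow_succ']; group
        rw [e] at hrel
        intro h0
        rw [h0, add_zero] at hrel
        exact ih hrel
    have hinj : Function.Injective (fun k : ℕ => bsA⁻¹ ^ k * u) := by
      intro k j hkj
      simp only at hkj
      exact ainvpow_inj (mul_right_cancel hkj)
    have hinf : {g : BSGroup | -φ u - 1 < -φ g ∧ h g ≠ 0}.Infinite :=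
      Set.infinite_of_injective_forall_mem hinj
        (fun k => ⟨by rw [hphiAinv]; linarith, hchain k⟩)
    exact hinf (hN (-φ u - 1))

end Phi4

/-- For the Baumslag–Solitar group `B = ⟨a, t | t⁻¹a²ta⁻¹⟩` and the homomorphism
`φ : B → ℝ` with `φ(t) = 1`, `φ(a) = 0`, the Fox derivative `r_a = t⁻¹(1 + a) - 1`
is invertible in the Novikov–Sikorav completion `Ẑ[B]_φ`, but not invertible in
`Ẑ[B]_{-φ}`. -/
theorem bs_fox_deriv_invertible [DecidableEq BSGroup]
    (φ : BSGroup → ℝ) (hφ : ∀ x y : BSGroup, φ (x * y) = φ x + φ y)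
    (hφt : φ bsT = 1) (hφa : φ bsA = 0) :
    (∃ h : BSGroup → ℤ, NovikovCond φ h ∧
      (novConv h (⇑bsRa.coeff) = fun g => if g = 1 then 1 else 0) ∧
      (novConv (⇑bsRa.coeff) h = fun g => if g = 1 then 1 else 0)) ∧
    ¬ (∃ h : BSGroup → ℤ, NovikovCond (fun g => -φ g) h ∧
      (novConv h (⇑bsRa.coeff) = fun g => if g = 1 then 1 else 0) ∧
      (novConv (⇑bsRa.coeff) h = fun g => if g = 1 then 1 else 0)) := by
  constructor
  · refine ⟨bsH0, h0_nov hφ hφt hφa, ?_, ?_⟩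
    · funext g
      rw [conv_left hφ hφt hφa bsH0 g]
      exact leftKey hφ hφt hφa g
    · funext g
      rw [conv_right hφ hφt hφa bsH0 g]
      exact rightKey hφ hφt hφa g
  · rintro ⟨h, hN, -, h2⟩
    exact no_inverse hφ hφt hφa h hN h2
end
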